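/- arXiv:1708.02606 — 5 statements merged into one kernel-verified Lean document; each statement's English description precedes it below -/
import Mathlib

section
/- Let X be a locally path connected topological space and x₀ ∈ X. Then X is a small loop transfer space at x₀ if and only if for every open neighborhood U of x₀ there exists a path open cover 𝒱 = {V_α : α ∈ P(X,x₀)} of X at x₀ such that the path Spanier group π̃(𝒱, x₀) is contained in i_*π₁(U, x₀), where i_* : π₁(U,x₀) → π₁(X,x₀) is induced by the inclusion U → X. -/
open TopologicalSpace

attribute [local instance] Path.Homotopic.setoid

/-- The homotopy class of a loop, as an element of the fundamental group. -/
noncomputable def loopClass {X : Type*} [TopologicalSpace X] {x : X} (γ : Path x x) :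
    FundamentalGroup X x :=
  FundamentalGroup.fromPath (X := TopCat.of X) ⟦γ⟧

/-- `α` is a small loop transfer (SLT) path: for every open neighborhood `U` of `α 0`
there is an open neighborhood `V` of `α 1` such that every loop at `α 1` inside `V` is
path-homotopic to some loop at `α 0` inside `U` conjugated along `α`. -/
def IsSLTPath {X : Type*} [TopologicalSpace X] {x₀ x₁ : X} (α : Path x₀ x₁) : Prop :=
  ∀ U : Set X, IsOpen U → x₀ ∈ U →
    ∃ V : Set X, IsOpen V ∧ x₁ ∈ V ∧
      ∀ γ : Path x₁ x₁, (∀ t, γ t ∈ V) →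
        ∃ γ' : Path x₀ x₀, (∀ t, γ' t ∈ U) ∧
          γ'.Homotopic ((α.trans γ).trans α.symm)

/-- `X` is a small loop transfer space at `x₀`: every path starting at `x₀` is an SLT path. -/
def IsSLTAt (X : Type*) [TopologicalSpace X] (x₀ : X) : Prop :=
  ∀ (x₁ : X) (α : Path x₀ x₁), IsSLTPath α

/-- `X` is SLTL at `x₀`: every loop based at `x₀` is an SLT path. -/
def IsSLTLAt (X : Type*) [TopologicalSpace X] (x₀ : X) : Prop :=
  ∀ γ : Path x₀ x₀, IsSLTPath γ

/-- `X` is SLTP at `x₀`: every non-loop path starting at `x₀` is an SLT path. -/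
def IsSLTPAt (X : Type*) [TopologicalSpace X] (x₀ : X) : Prop :=
  ∀ (x₁ : X) (α : Path x₀ x₁), x₁ ≠ x₀ → IsSLTPath α

/-- The set of homotopy classes of loops based at `x₀` with image contained in `U`;
this is the image `i₊π₁(U, x₀)` of the homomorphism induced by the inclusion `U → X`. -/
noncomputable def loopClassesIn {X : Type*} [TopologicalSpace X] (x₀ : X) (U : Set X) :
    Set (FundamentalGroup X x₀) :=
  { g | ∃ γ : Path x₀ x₀, (∀ t, γ t ∈ U) ∧ g = loopClass γ }

/-- The quotient topology on the fundamental group, coinduced by the map from the loop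
space (with the compact-open topology) sending a loop to its homotopy class. -/
noncomputable def qtop (X : Type*) [TopologicalSpace X] (x₀ : X) :
    TopologicalSpace (FundamentalGroup X x₀) :=
  coinduced (fun γ : Path x₀ x₀ => loopClass γ) inferInstance

/-- The whisker topology on the fundamental group, generated by the basis of cosets
`[α] · i₊π₁(U, x₀)` for `U` an open neighborhood of `x₀`. -/
noncomputable def whTop (X : Type*) [TopologicalSpace X] (x₀ : X) :
    TopologicalSpace (FundamentalGroup X x₀) :=
  generateFrom { S | ∃ (g : FundamentalGroup X x₀) (U : Set X), IsOpen U ∧ x₀ ∈ U ∧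
      S = (fun h => g * h) '' loopClassesIn x₀ U }

/-- A loop based at `x` is small if every open neighborhood of `x` contains a
representative of its homotopy class. -/
def IsSmallLoop {X : Type*} [TopologicalSpace X] {x : X} (γ : Path x x) : Prop :=
  ∀ U : Set X, IsOpen U → x ∈ U →
    ∃ δ : Path x x, (∀ t, δ t ∈ U) ∧ δ.Homotopic γ

/-- `π₁ˢ(X, x)`: the set of homotopy classes of small loops based at `x`. -/
noncomputable def pi1s {X : Type*} [TopologicalSpace X] (x : X) :
    Set (FundamentalGroup X x) :=
  { g | ∃ γ : Path x x, IsSmallLoop γ ∧ g = loopClass γ }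

/-- `π₁ˢᵍ(X, x₀)`: the subgroup generated by classes `[α * β * α⁻¹]` where `α` is a path
starting at `x₀` and `β` is a small loop based at `α 1`. -/
noncomputable def pi1sg {X : Type*} [TopologicalSpace X] (x₀ : X) :
    Subgroup (FundamentalGroup X x₀) :=
  Subgroup.closure { g | ∃ (x₁ : X) (α : Path x₀ x₁) (β : Path x₁ x₁), IsSmallLoop β ∧
      g = loopClass ((α.trans β).trans α.symm) }

/-- The path Spanier group of a path open cover `V` at `x₀`: the subgroup generated by the
classes `[α * β * α⁻¹]` where `α` is a path starting at `x₀` and `β` is a loop based at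
`α 1` with image inside `V α`. -/
noncomputable def pathSpanierGroup {X : Type*} [TopologicalSpace X] (x₀ : X)
    (V : ∀ x₁ : X, Path x₀ x₁ → Set X) : Subgroup (FundamentalGroup X x₀) :=
  Subgroup.closure { g | ∃ (x₁ : X) (α : Path x₀ x₁) (β : Path x₁ x₁),
      (∀ t, β t ∈ V x₁ α) ∧ g = loopClass ((α.trans β).trans α.symm) }

/-- `X` is small "small loop" transfer (SSLT) at `x₀`. -/
def IsSSLTAt (X : Type*) [TopologicalSpace X] (x₀ : X) : Prop :=
  ∀ (x₁ : X) (α : Path x₀ x₁) (U : Set X), IsOpen U → x₀ ∈ U →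
    ∃ V : Set X, IsOpen V ∧ x₁ ∈ V ∧
      ∀ β : Path x₁ x₁, IsSmallLoop β → (∀ t, β t ∈ V) →
        ∃ γ : Path x₀ x₀, (∀ t, γ t ∈ U) ∧
          γ.Homotopic ((α.trans β).trans α.symm)

/-- `X` is semilocally small generated: every point has an open neighborhood `U` with
`i₊π₁(U, x) ≤ π₁ˢᵍ(X, x)`. -/
noncomputable def SemilocallySmallGenerated (X : Type*) [TopologicalSpace X] : Prop :=
  ∀ x : X, ∃ U : Set X, IsOpen U ∧ x ∈ U ∧ loopClassesIn x U ⊆ (pi1sg x : Set (FundamentalGroup X x))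


section SLTAux

open CategoryTheory

variable {X : Type*} [TopologicalSpace X] {x : X}

lemma loopClass_eq_iff (γ δ : Path x x) : loopClass γ = loopClass δ ↔ γ.Homotopic δ := by
  constructor
  · intro h
    have h2 := h
    have : (⟦γ⟧ : Path.Homotopic.Quotient x x) = ⟦δ⟧ := h2
    exact Quotient.exact this
  · intro h
    unfold loopClass
    congr 1
    exact Quotient.sound h

lemma loopClass_trans (γ δ : Path x x) : loopClass (γ.trans δ) = loopClass δ * loopClass γ := by
  exact rfl

lemma loopClass_symm (γ : Path x x) : loopClass γ.symm = (loopClass γ)⁻¹ := by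
  rfl

lemma loopClass_refl : loopClass (Path.refl x) = 1 := by
  rfl

/-- `loopClassesIn` as a subgroup. -/
noncomputable def loopClassesSubgroup (x₀ : X) (U : Set X) (hx : x₀ ∈ U) :
    Subgroup (FundamentalGroup X x₀) where
  carrier := loopClassesIn x₀ U
  one_mem' := ⟨Path.refl x₀, fun _ => hx, loopClass_refl.symm⟩
  mul_mem' := by
    rintro a b ⟨γ, hγ, rfl⟩ ⟨δ, hδ, rfl⟩
    refine ⟨δ.trans γ, fun t => ?_, (loopClass_trans δ γ).symm⟩
    rw [Path.trans_apply]
    split_ifs <;> [exact hδ _; exact hγ _]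
  inv_mem' := by
    rintro a ⟨γ, hγ, rfl⟩
    exact ⟨γ.symm, fun t => hγ _, (loopClass_symm γ).symm⟩

end SLTAux

/-- For a locally path connected space, `X` is SLT at `x₀` iff for every open
neighborhood `U` of `x₀` there is a path open cover `V` of `X` at `x₀` whose path Spanier
group is contained in `i₊π₁(U, x₀)`. -/
theorem slt_iff_pathSpanier {X : Type*} [TopologicalSpace X] [LocallyPathConnectedSpace X]
    (x₀ : X) :
    IsSLTAt X x₀ ↔
      ∀ U : Set X, IsOpen U → x₀ ∈ U →
        ∃ V : ∀ x₁ : X, Path x₀ x₁ → Set X,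
          (∀ (x₁ : X) (α : Path x₀ x₁), IsOpen (V x₁ α) ∧ x₁ ∈ V x₁ α) ∧
          (pathSpanierGroup x₀ V : Set (FundamentalGroup X x₀)) ⊆ loopClassesIn x₀ U := by
  constructor
  · intro h U hUo hx
    have hch : ∀ (x₁ : X) (α : Path x₀ x₁), ∃ V : Set X, IsOpen V ∧ x₁ ∈ V ∧
        ∀ γ : Path x₁ x₁, (∀ t, γ t ∈ V) →
          ∃ γ' : Path x₀ x₀, (∀ t, γ' t ∈ U) ∧
            γ'.Homotopic ((α.trans γ).trans α.symm) :=
      fun x₁ α => h x₁ α U hUo hx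
    choose V hVo hVm hVt using hch
    refine ⟨V, fun x₁ α => ⟨hVo x₁ α, hVm x₁ α⟩, ?_⟩
    have : pathSpanierGroup x₀ V ≤ loopClassesSubgroup x₀ U hx := by
      apply Subgroup.closure_le (loopClassesSubgroup x₀ U hx) |>.mpr
      rintro g ⟨x₁, α, β, hβ, rfl⟩
      obtain ⟨γ', hγ', hhom⟩ := hVt x₁ α β hβ
      exact ⟨γ', hγ', ((loopClass_eq_iff _ _).mpr hhom).symm⟩
    exact this
  · intro h x₁ α U hUo hx
    obtain ⟨V, hV, hsub⟩ := h U hUo hx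
    refine ⟨V x₁ α, (hV x₁ α).1, (hV x₁ α).2, fun γ hγ => ?_⟩
    have hg : loopClass ((α.trans γ).trans α.symm) ∈ pathSpanierGroup x₀ V :=
      Subgroup.subset_closure ⟨x₁, α, γ, hγ, rfl⟩
    obtain ⟨γ', hγ', heq⟩ := hsub hg
    exact ⟨γ', hγ', (loopClass_eq_iff _ _).mp heq.symm⟩
end

section
/- Let X be a connected, locally path connected topological space and x₀ ∈ X. If X is a small loop transfer space at x₀, then both π₁^{qtop}(X, x₀) and π₁^{wh}(X, x₀) are topological groups (i.e., multiplication and inversion are continuous with respect to each of these topologies). -/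
open TopologicalSpace

attribute [local instance] Path.Homotopic.setoid

section Auxiliary
open Topology CategoryTheory unitInterval

section basic
variable {X : Type*} [TopologicalSpace X] {x₀ : X}

lemma loopClass_ext {γ δ : Path x₀ x₀}
    (h : (⟦γ⟧ : Path.Homotopic.Quotient x₀ x₀) = ⟦δ⟧) : loopClass γ = loopClass δ := by
  exact h

lemma loopClass_eq_of_homotopic {γ δ : Path x₀ x₀} (h : γ.Homotopic δ) :
    loopClass γ = loopClass δ := loopClass_ext (Quotient.sound h)

lemma loopClass_mul (γ δ : Path x₀ x₀) :
    loopClass γ * loopClass δ = loopClass (δ.trans γ) := by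
  exact (Path.Homotopic.Quotient.mk_trans δ γ).symm

lemma loopClass_one : loopClass (Path.refl x₀) = (1 : FundamentalGroup X x₀) := by
  rfl

lemma loopClass_inv (γ : Path x₀ x₀) : (loopClass γ)⁻¹ = loopClass γ.symm := by
  rfl

lemma loopClass_surjective (g : FundamentalGroup X x₀) : ∃ γ : Path x₀ x₀, g = loopClass γ := by
  obtain ⟨γ, hγ⟩ := Quotient.exists_rep (FundamentalGroup.toPath (X := TopCat.of X) g)
  exact ⟨γ, hγ.symm⟩
end basic

section psubs
variable {X : Type*} [TopologicalSpace X]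

/-- Straight-line reparametrization subpath of a path. -/
noncomputable def psub {x y : X} (γ : Path x y) (a b : ℝ) : Path (γ.extend a) (γ.extend b) where
  toFun := fun t => γ.extend ((1 - t) * a + t * b)
  continuous_toFun := γ.continuous_extend.comp (by continuity)
  source' := by simp
  target' := by simp

@[simp] lemma psub_apply {x y : X} (γ : Path x y) (a b : ℝ) (t : I) :
    psub γ a b t = γ.extend ((1 - t) * a + t * b) := rfl

lemma homotopic_extend {x y u v : X} (γ : Path x y) (p q : Path u v) (φ ψ : I → ℝ)
    (hφ : Continuous φ) (hψ : Continuous ψ) (h0 : φ 0 = ψ 0) (h1 : φ 1 = ψ 1)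
    (hp : ∀ t, p t = γ.extend (φ t)) (hq : ∀ t, q t = γ.extend (ψ t)) :
    p.Homotopic q := by
  refine ⟨⟨⟨⟨fun st => γ.extend ((1 - st.1) * φ st.2 + st.1 * ψ st.2), ?_⟩, ?_, ?_⟩, ?_⟩⟩
  · exact γ.continuous_extend.comp (by continuity)
  · intro t
    rw [show p.toContinuousMap t = p t from rfl, hp t]
    norm_num
  · intro t
    rw [show q.toContinuousMap t = q t from rfl, hq t]
    norm_num
  · intro s t ht
    have hpq : γ.extend (φ t) = p t := (hp t).symm
    have key : (1 - (s:ℝ)) * φ t + s * ψ t = φ t := by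
      rcases ht with ht | ht
      · have : t = 0 := ht
        subst this; rw [h0]; ring
      · have : t = 1 := Set.mem_singleton_iff.mp ht
        subst this; rw [h1]; ring
    show γ.extend _ = p.toContinuousMap t
    rw [key]
    exact hpq

lemma psub_symm {x y : X} (γ : Path x y) (a b : ℝ) : (psub γ a b).symm = psub γ b a := by
  ext t
  show (psub γ a b) (σ t) = _
  simp only [psub_apply, coe_symm_eq]
  ring_nf

@[simp] lemma path_cast_apply {x y x' y' : X} (γ : Path x y) (hx : x' = x) (hy : y' = y) (t : I) :
    (γ.cast hx hy) t = γ t := rfl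

lemma psub_trans_cast {x y u : X} (γ : Path x y) {a b c : ℝ} (hx : u = γ.extend a) :
    (((psub γ a b).cast hx rfl).trans (psub γ b c)).Homotopic ((psub γ a c).cast hx rfl) := by
  have hcont1 : Continuous fun t : I => (1 - 2 * (t:ℝ)) * a + 2 * t * b := by continuity
  have hcont2 : Continuous fun t : I => (2 - 2 * (t:ℝ)) * b + (2 * t - 1) * c := by continuity
  refine homotopic_extend γ _ _
    (fun t => if (t:ℝ) ≤ 1/2 then (1 - 2*t) * a + 2*t*b else (2 - 2*t) * b + (2*t - 1) * c)
    (fun t => (1 - t) * a + t * c) ?_ (by continuity) (by norm_num) (by norm_num) ?_ ?_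
  · apply Continuous.if_le hcont1 hcont2 continuous_subtype_val continuous_const
    intro t ht; rw [ht]; ring
  · intro t
    rw [Path.trans_apply]
    split_ifs with h
    · rfl
    · show γ.extend _ = γ.extend _
      ring_nf
  · intro t
    simp only [path_cast_apply, psub_apply]

/-- The morphism in the fundamental groupoid induced by a path. -/
noncomputable def mor {a b : X} (p : Path a b) :
    FundamentalGroupoid.mk a ⟶ FundamentalGroupoid.mk b := ⟦p⟧

lemma mor_trans {a b c : X} (p : Path a b) (q : Path b c) :
    mor (p.trans q) = mor p ≫ mor q :=
  Path.Homotopic.Quotient.mk_trans p q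

lemma mor_symm {a b : X} (p : Path a b) : mor p.symm = inv (mor p) := by
  symm
  rw [← Groupoid.inv_eq_inv]
  rfl

lemma mor_eq_of_homotopic {a b : X} {p q : Path a b} (h : p.Homotopic q) : mor p = mor q :=
  Quotient.sound h

lemma path_cast_rfl_rfl {a b : X} (p : Path a b) : p.cast rfl rfl = p := by
  ext t; rfl

lemma mor_refl (a : X) : mor (Path.refl a) = 𝟙 (FundamentalGroupoid.mk a) := rfl

lemma mor_cast {a b a' b' : X} (p : Path a b) (hx : a' = a) (hy : b' = b) :
    mor (p.cast hx hy) =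
      eqToHom (congrArg FundamentalGroupoid.mk hx) ≫ mor p ≫
        eqToHom (congrArg FundamentalGroupoid.mk hy.symm) := by
  subst hx; subst hy
  simp [path_cast_rfl_rfl]

lemma trans_mem {a b c : X} {p : Path a b} {q : Path b c} {S : Set X}
    (hp : ∀ t, p t ∈ S) (hq : ∀ t, q t ∈ S) : ∀ t, (p.trans q) t ∈ S := by
  intro t
  have ht : (p.trans q) t ∈ Set.range (p.trans q) := Set.mem_range_self t
  rw [Path.trans_range] at ht
  rcases ht with ⟨u, hu⟩ | ⟨u, hu⟩
  · exact hu ▸ hp u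
  · exact hu ▸ hq u

lemma symm_mem {a b : X} {p : Path a b} {S : Set X} (hp : ∀ t, p t ∈ S) :
    ∀ t, p.symm t ∈ S := fun t => hp (σ t)

lemma psub_mem {x y : X} (γ : Path x y) {a b : ℝ} (ha : a ∈ Set.Icc (0:ℝ) 1)
    (hb : b ∈ Set.Icc (0:ℝ) 1) {S : Set X}
    (hS : ∀ r : I, min a b ≤ (r:ℝ) → (r:ℝ) ≤ max a b → γ r ∈ S) :
    ∀ t, psub γ a b t ∈ S := by
  intro t
  have ht0 : (0:ℝ) ≤ t := t.2.1
  have ht1 : (t:ℝ) ≤ 1 := t.2.2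
  set r : ℝ := (1 - t) * a + t * b with hr
  have hmin : min a b ≤ r := by
    rcases min_cases a b with ⟨heq, hle⟩ | ⟨heq, hle⟩ <;> rw [heq] <;> nlinarith
  have hmax : r ≤ max a b := by
    rcases max_cases a b with ⟨heq, hle⟩ | ⟨heq, hle⟩ <;> rw [heq] <;> nlinarith
  have hr0 : 0 ≤ r := le_trans (le_min ha.1 hb.1) hmin
  have hr1 : r ≤ 1 := le_trans hmax (max_le ha.2 hb.2)
  have : psub γ a b t = γ ⟨r, hr0, hr1⟩ := by
    simp only [psub_apply]
    exact γ.extend_apply ⟨hr0, hr1⟩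
  rw [this]
  exact hS _ hmin hmax
end psubs

section dcore2
variable {X : Type*} [TopologicalSpace X] {x₀ : X}

lemma exists_partition (β : Path x₀ x₀) (V : I → Set X) (hV : ∀ s, IsOpen (V s))
    (hmem : ∀ s, β s ∈ V s) :
    ∃ n : ℕ, 0 < n ∧ ∃ s : ℕ → I, ∀ j, j < n → ∀ r : I,
      min ((j : ℝ)/n) (s j : ℝ) ≤ (r : ℝ) → (r : ℝ) ≤ max (((j : ℝ)+1)/n) (s j : ℝ) →
      β r ∈ V (s j) := by
  -- step 1: local radii
  have hloc : ∀ s : I, ∃ ε : ℝ, 0 < ε ∧ ∀ r : I, |(r : ℝ) - (s : ℝ)| ≤ ε → β r ∈ V s := by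
    intro s
    have hopen : IsOpen (β ⁻¹' V s) := (hV s).preimage β.continuous
    obtain ⟨ε', hε', hball⟩ := Metric.isOpen_iff.mp hopen s (hmem s)
    refine ⟨ε'/2, by linarith, fun r hr => hball ?_⟩
    have : dist r s = |(r : ℝ) - (s : ℝ)| := Subtype.dist_eq r s
    rw [Metric.mem_ball, this]
    linarith
  choose ε hεpos hε using hloc
  -- step 2: compactness
  have hcover : (Set.univ : Set I) ⊆ ⋃ s : I, Metric.ball s (ε s / 2) := by
    intro r _
    exact Set.mem_iUnion.mpr ⟨r, Metric.mem_ball_self (by linarith [hεpos r])⟩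
  obtain ⟨T, hT⟩ := isCompact_univ.elim_finite_subcover
    (fun s : I => Metric.ball s (ε s / 2)) (fun s => Metric.isOpen_ball) hcover
  have hTne : T.Nonempty := by
    by_contra hemp
    rw [Finset.not_nonempty_iff_eq_empty] at hemp
    have := hT (Set.mem_univ (0 : I))
    simp [hemp] at this
  set δ : ℝ := T.inf' hTne (fun s => ε s / 2) with hδdef
  have hδpos : 0 < δ := by
    rw [hδdef, Finset.lt_inf'_iff]
    exact fun s _ => by linarith [hεpos s]
  set n : ℕ := ⌈1/δ⌉₊ with hndef
  have hnpos : 0 < n := Nat.ceil_pos.mpr (by positivity)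
  have hinv : 1/(n : ℝ) ≤ δ := by
    rw [div_le_iff₀ (by exact_mod_cast hnpos)]
    have h1 : 1/δ ≤ (n : ℝ) := Nat.le_ceil _
    calc (1:ℝ) = δ * (1/δ) := by field_simp
    _ ≤ δ * n := by exact mul_le_mul_of_nonneg_left h1 hδpos.le
  -- step 3: choose tags
  have htag : ∀ j : ℕ, ∃ s : I, j < n → (s ∈ T ∧ |((j:ℝ)/n) - (s : ℝ)| < ε s / 2) := by
    intro j
    by_cases hj : j < n
    · have hmemI : ((j:ℝ)/n) ∈ (Set.Icc 0 1 : Set ℝ) := by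
        constructor
        · positivity
        · rw [div_le_one (by exact_mod_cast hnpos)]
          exact_mod_cast hj.le
      have := hT (Set.mem_univ (⟨_, hmemI⟩ : I))
      rw [Set.mem_iUnion₂] at this
      obtain ⟨s, hsT, hball⟩ := this
      refine ⟨s, fun _ => ⟨hsT, ?_⟩⟩
      have : dist (⟨_, hmemI⟩ : I) s = |((j:ℝ)/n) - (s : ℝ)| := Subtype.dist_eq _ _
      rw [Metric.mem_ball, this] at hball
      exact hball
    · exact ⟨0, fun h => absurd h hj⟩
  choose s hs using htag
  refine ⟨n, hnpos, s, fun j hj r hr1 hr2 => ?_⟩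
  obtain ⟨hsT, hdist⟩ := hs j hj
  have hδs : δ ≤ ε (s j) / 2 := Finset.inf'_le _ hsT
  apply hε (s j)
  rw [abs_le]
  have habs := abs_le.mp hdist.le
  constructor
  · -- -(ε) ≤ r - s
    rcases le_or_gt (s j : ℝ) (r : ℝ) with h | h
    · linarith [hεpos (s j)]
    · -- r < s : s - r ≤ s - min(j/n, s)
      have : min ((j:ℝ)/n) (s j : ℝ) ≤ (r:ℝ) := hr1
      rcases min_cases ((j:ℝ)/n) (s j : ℝ) with ⟨heq, hle⟩ | ⟨heq, hle⟩
      · rw [heq] at this; linarith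
      · rw [heq] at this; linarith [hεpos (s j)]
  · -- r - s ≤ ε
    rcases le_or_gt (r : ℝ) (s j : ℝ) with h | h
    · linarith [hεpos (s j)]
    · have : (r:ℝ) ≤ max (((j:ℝ)+1)/n) (s j : ℝ) := hr2
      rcases max_cases (((j:ℝ)+1)/n) (s j : ℝ) with ⟨heq, hle⟩ | ⟨heq, hle⟩
      · rw [heq] at this
        have hstep : ((j:ℝ)+1)/n = (j:ℝ)/n + 1/n := by ring
        have : (r:ℝ) - (s j : ℝ) ≤ (j:ℝ)/n - (s j) + 1/n := by
          rw [hstep] at this; linarith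
        linarith
      · rw [heq] at this; linarith [hεpos (s j)]

/-- The key transfer lemma: around any loop `β` there is an open set of loops all of whose
elements differ from `β` by (right multiplication with) a loop in `U`. -/
lemma slt_transfer_nbhd [LocallyPathConnectedSpace X]
    (hslt : IsSLTAt X x₀) (β : Path x₀ x₀) {U : Set X} (hU : IsOpen U) (hxU : x₀ ∈ U) :
    ∃ N : Set (Path x₀ x₀), IsOpen N ∧ β ∈ N ∧
      ∀ η ∈ N, ∃ κ : Path x₀ x₀, (∀ t, κ t ∈ U) ∧
        loopClass η = loopClass β * loopClass κ := by
  classical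
  have hx0β : x₀ = β.extend 0 := β.extend_zero.symm
  -- SLT data along the initial segments of β
  have hdat : ∀ s : I, ∃ V₀ : Set X, IsOpen V₀ ∧ β.extend ↑s ∈ V₀ ∧
      ∀ γ : Path (β.extend ↑s) (β.extend ↑s), (∀ t, γ t ∈ V₀) →
        ∃ κ : Path x₀ x₀, (∀ t, κ t ∈ U) ∧
          κ.Homotopic (((((psub β 0 ↑s).cast hx0β rfl).trans γ).trans
            ((psub β 0 ↑s).cast hx0β rfl).symm)) := by
    intro s
    obtain ⟨V₀, hopen, hmem, htrans⟩ :=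
      hslt (β.extend ↑s) ((psub β 0 ↑s).cast hx0β rfl) U hU hxU
    exact ⟨V₀, hopen, hmem, htrans⟩
  choose V₀ hV₀open hV₀mem hV₀trans using hdat
  set V : I → Set X := fun s => pathComponentIn (V₀ s) (β.extend ↑s) with hVdef
  have hVopen : ∀ s, IsOpen (V s) := fun s => (hV₀open s).pathComponentIn _
  have hVmem' : ∀ s, β.extend ↑s ∈ V s := fun s => mem_pathComponentIn_self (hV₀mem s)
  have hVmem : ∀ s : I, β s ∈ V s := by
    intro s
    have := hVmem' s
    rwa [β.extend_extends' s] at this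
  have hVsub : ∀ s, V s ⊆ V₀ s := fun s => pathComponentIn_subset
  -- the partition
  obtain ⟨n, hn, s, hseg⟩ := exists_partition β V hVopen hVmem
  have hnR : (0:ℝ) < n := by exact_mod_cast hn
  have hseg' : ∀ j, j < n → ∀ r : I,
      min ((j : ℝ)/n) (s j : ℝ) ≤ (r : ℝ) → (r : ℝ) ≤ max (((j+1 : ℕ) : ℝ)/n) (s j : ℝ) →
      β r ∈ V (s j) := by
    intro j hj r h1 h2
    apply hseg j hj r h1
    convert h2 using 3
    push_cast
    ring
  have hℓIcc : ∀ j : ℕ, j ≤ n → ((j:ℝ)/n) ∈ Set.Icc (0:ℝ) 1 := by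
    intro j hj
    constructor
    · positivity
    · rw [div_le_one hnR]
      exact_mod_cast hj
  -- extend-form of the segment property
  have hsegext : ∀ j, j < n → ∀ r : ℝ, r ∈ Set.Icc (0:ℝ) 1 →
      min ((j : ℝ)/n) (s j : ℝ) ≤ r → r ≤ max (((j+1:ℕ) : ℝ)/n) (s j : ℝ) →
      β.extend r ∈ V (s j) := by
    intro j hj r hr h1 h2
    rw [β.extend_apply hr]
    exact hseg' j hj ⟨r, hr⟩ h1 h2
  -- the connecting neighborhoods
  set Vpair : ℕ → Set X := fun j => match j with
    | 0 => Set.univ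
    | (i+1) => if i+1 < n then V (s i) ∩ V (s (i+1)) else Set.univ with hVpairdef
  have hVpairopen : ∀ j, IsOpen (Vpair j) := by
    intro j
    match j with
    | 0 => exact isOpen_univ
    | (i+1) =>
      by_cases h : i+1 < n
      · simp only [hVpairdef, if_pos h]
        exact (hVopen _).inter (hVopen _)
      · simp only [hVpairdef, if_neg h]
        exact isOpen_univ
  have hstep : ∀ j : ℕ, ((j:ℝ))/n ≤ (((j+1:ℕ)):ℝ)/n := by
    intro j
    rw [div_le_div_iff_of_pos_right hnR]
    push_cast
    linarith
  have hVpairbase : ∀ j, β.extend ((j:ℝ)/n) ∈ Vpair j := by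
    intro j
    match j with
    | 0 => exact Set.mem_univ _
    | (i+1) =>
      by_cases h : i+1 < n
      · simp only [hVpairdef, if_pos h]
        constructor
        · exact hsegext i (by omega) _ (hℓIcc (i+1) (by omega))
            (le_trans (min_le_left _ _) (hstep i)) (le_max_left _ _)
        · exact hsegext (i+1) h _ (hℓIcc (i+1) (by omega))
            (min_le_left _ _) (le_trans (hstep (i+1)) (le_max_left _ _))
      · simp only [hVpairdef, if_neg h]
        exact Set.mem_univ _
  set W : ℕ → Set X := fun j => pathComponentIn (Vpair j) (β.extend ((j:ℝ)/n)) with hWdef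
  have hWopen : ∀ j, IsOpen (W j) := fun j => (hVpairopen j).pathComponentIn _
  have hWmem : ∀ j, β.extend ((j:ℝ)/n) ∈ W j := fun j => mem_pathComponentIn_self (hVpairbase j)
  -- the compact subintervals
  set K : ℕ → Set I := fun j => {t : I | (j:ℝ)/n ≤ (t:ℝ) ∧ (t:ℝ) ≤ ((j+1:ℕ):ℝ)/n} with hKdef
  have hKcompact : ∀ j, IsCompact (K j) := by
    intro j
    apply IsClosed.isCompact
    apply IsClosed.inter
    · exact isClosed_le continuous_const continuous_subtype_val
    · exact isClosed_le continuous_subtype_val continuous_const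
  -- the neighborhood N of β
  set N : Set (Path x₀ x₀) :=
    (⋂ j ∈ Finset.range n, {η : Path x₀ x₀ | Set.MapsTo ⇑η (K j) (V (s j))}) ∩
    (⋂ j ∈ Finset.range n, {η : Path x₀ x₀ | 0 < j → η.extend ((j:ℝ)/n) ∈ W j}) with hNdef
  have hNmem : ∀ η : Path x₀ x₀, η ∈ N ↔
      ((∀ j, j < n → Set.MapsTo ⇑η (K j) (V (s j))) ∧
        (∀ j, 0 < j → j < n → η.extend ((j:ℝ)/n) ∈ W j)) := by
    intro η
    simp only [hNdef, Set.mem_inter_iff, Set.mem_iInter, Finset.mem_range, Set.mem_setOf_eq]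
    constructor
    · rintro ⟨h1, h2⟩
      exact ⟨fun j hj => h1 j hj, fun j hj1 hj2 => h2 j hj2 hj1⟩
    · rintro ⟨h1, h2⟩
      exact ⟨fun j hj => h1 j hj, fun j hj2 hj1 => h2 j hj1 hj2⟩
  have hNopen : IsOpen N := by
    apply IsOpen.inter
    · apply isOpen_biInter_finset
      intro j _
      have : {η : Path x₀ x₀ | Set.MapsTo ⇑η (K j) (V (s j))} =
          Path.toContinuousMap ⁻¹' {f : C(I,X) | Set.MapsTo ⇑f (K j) (V (s j))} := rfl
      rw [this]
      exact (ContinuousMap.isOpen_setOf_mapsTo (hKcompact j) (hVopen (s j))).preimage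
        continuous_induced_dom
    · apply isOpen_biInter_finset
      intro j _
      by_cases hj : 0 < j
      · have : {η : Path x₀ x₀ | 0 < j → η.extend ((j:ℝ)/n) ∈ W j} =
            (fun η : Path x₀ x₀ => η.extend ((j:ℝ)/n)) ⁻¹' (W j) := by
          ext η; simp [hj]
        rw [this]
        exact (hWopen j).preimage (Continuous.pathExtend continuous_eval continuous_const)
      · have : {η : Path x₀ x₀ | 0 < j → η.extend ((j:ℝ)/n) ∈ W j} = Set.univ := by
          ext η; simp [hj]
        rw [this]; exact isOpen_univ
  have hβN : β ∈ N := by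
    rw [hNmem]
    constructor
    · intro j hj t ht
      exact hseg' j hj t (le_trans (min_le_left _ _) ht.1)
        (le_trans ht.2 (le_max_left _ _))
    · intro j _ _
      exact hWmem j
  refine ⟨N, hNopen, hβN, ?_⟩
  intro η hηN
  obtain ⟨hη1, hη2⟩ := (hNmem η).mp hηN
  -- auxiliary endpoint identities
  have hβ0 : β.extend (((0:ℕ):ℝ)/n) = x₀ := by
    rw [show (((0:ℕ):ℝ))/(n:ℝ) = 0 by norm_num, Path.extend_zero]
  have hη0 : η.extend (((0:ℕ):ℝ)/n) = x₀ := by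
    rw [show (((0:ℕ):ℝ))/(n:ℝ) = 0 by norm_num, Path.extend_zero]
  -- the connecting paths
  have hcex : ∀ j : ℕ, ∃ p : Path (β.extend ((j:ℝ)/n)) (η.extend ((j:ℝ)/n)),
      (j < n → ∀ t, p t ∈ V (s j)) ∧ (∀ i, j = i + 1 → i < n → ∀ t, p t ∈ V (s i)) ∧
      ((j = 0 ∨ n ≤ j) → ∀ t, p t = x₀) := by
    intro j
    match j with
    | 0 =>
      refine ⟨(Path.refl x₀).cast hβ0 hη0, ?_, ?_, ?_⟩
      · intro h t
        rw [path_cast_apply]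
        show x₀ ∈ V (s 0)
        have h0 : β 0 ∈ V (s 0) := by
          apply hseg' 0 h 0
          · apply min_le_of_left_le
            norm_num
          · apply le_max_of_le_right
            exact_mod_cast (s 0).2.1
        rwa [β.source] at h0
      · intro i hi _
        exact absurd hi (by omega)
      · intro _ t
        rfl
    | (i+1) =>
      by_cases h : i+1 < n
      · have hβW : β.extend (((i+1:ℕ):ℝ)/n) ∈ W (i+1) :=
          mem_pathComponentIn_self (hVpairbase (i+1))
        have hηW : η.extend (((i+1:ℕ):ℝ)/n) ∈ W (i+1) := hη2 (i+1) (by omega) h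
        have hjoin : JoinedIn (W (i+1)) (β.extend (((i+1:ℕ):ℝ)/n)) (η.extend (((i+1:ℕ):ℝ)/n)) :=
          (isPathConnected_pathComponentIn (hVpairbase (i+1))).joinedIn _ hβW _ hηW
        have hsub : W (i+1) ⊆ V (s i) ∩ V (s (i+1)) := by
          refine le_trans pathComponentIn_subset ?_
          simp only [hVpairdef, if_pos h]
          exact le_rfl
        refine ⟨hjoin.somePath, ?_, ?_, ?_⟩
        · intro _ t
          exact (hsub (hjoin.somePath_mem t)).2
        · intro i' hi' _
          have : i' = i := by omega
          subst this
          exact fun t => (hsub (hjoin.somePath_mem t)).1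
        · rintro (h' | h') <;> [exact absurd h' (by omega); exact absurd h' (by omega)]
      · have hβ1 : β.extend (((i+1:ℕ):ℝ)/n) = x₀ := by
          apply Path.extend_of_one_le
          rw [le_div_iff₀ hnR]
          have hni : (n:ℝ) ≤ ((i+1:ℕ):ℝ) := by exact_mod_cast (by omega : n ≤ i+1)
          linarith
        have hη1' : η.extend (((i+1:ℕ):ℝ)/n) = x₀ := by
          apply Path.extend_of_one_le
          rw [le_div_iff₀ hnR]
          have hni : (n:ℝ) ≤ ((i+1:ℕ):ℝ) := by exact_mod_cast (by omega : n ≤ i+1)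
          linarith
        refine ⟨(Path.refl x₀).cast hβ1 hη1', ?_, ?_, ?_⟩
        · intro h'
          exact absurd h' h
        · intro i' hi' hi'n
          have : i' = i := by omega
          subst this
          intro t
          rw [path_cast_apply]
          show x₀ ∈ V (s i')
          have h1 : β 1 ∈ V (s i') := by
            apply hseg' i' hi'n 1
            · apply min_le_of_right_le
              exact_mod_cast (s i').2.2
            · apply le_max_of_le_left
              rw [Set.Icc.coe_one, le_div_iff₀ hnR]
              have hni : (n:ℝ) ≤ ((i'+1:ℕ):ℝ) := by exact_mod_cast (by omega : n ≤ i'+1)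
              linarith
          rwa [β.target] at h1
        · intro _ t
          rfl
  choose c hc1 hc2 hc3 using hcex
  -- main induction: the initial part of η, corrected by a connector, is β-initial times a
  -- U-loop
  have main : ∀ j, j ≤ n → ∃ κ : Path x₀ x₀, (∀ t, κ t ∈ U) ∧
      mor ((((psub η 0 ((j:ℝ)/n)).cast η.extend_zero.symm rfl).trans
        ((c j).symm.trans ((psub β 0 ((j:ℝ)/n)).cast hx0β rfl).symm))) = mor κ := by
    intro j
    induction j with
    | zero =>
      intro _
      refine ⟨Path.refl x₀, fun t => hxU, ?_⟩
      congr 1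
      have hval : ∀ u : I, ((((psub η 0 (((0:ℕ):ℝ)/n)).cast η.extend_zero.symm rfl).trans
          ((c 0).symm.trans ((psub β 0 (((0:ℕ):ℝ)/n)).cast hx0β rfl).symm))) u = x₀ := by
        intro u
        have hEη0 : ∀ v : I, ((psub η 0 (((0:ℕ):ℝ)/n)).cast η.extend_zero.symm rfl) v = x₀ := by
          intro v
          rw [path_cast_apply, psub_apply]
          rw [show (1-(v:ℝ))*0 + v*(((0:ℕ):ℝ)/n) = 0 by norm_num, Path.extend_zero]
        have hEβ0 : ∀ v : I, ((psub β 0 (((0:ℕ):ℝ)/n)).cast hx0β rfl) v = x₀ := by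
          intro v
          rw [path_cast_apply, psub_apply]
          rw [show (1-(v:ℝ))*0 + v*(((0:ℕ):ℝ)/n) = 0 by norm_num, Path.extend_zero]
        rw [Path.trans_apply]
        split_ifs with h1
        · exact hEη0 _
        · rw [Path.trans_apply]
          split_ifs with h2
          · show (c 0) (σ _) = x₀
            exact hc3 0 (Or.inl rfl) _
          · show ((psub β 0 (((0:ℕ):ℝ)/n)).cast hx0β rfl) (σ _) = x₀
            exact hEβ0 _
      ext u
      rw [hval u]
      rfl
    | succ i ih =>
      intro hsucc
      have hi : i < n := hsucc
      obtain ⟨κj, hκjU, hIH⟩ := ih (Nat.le_of_succ_le hsucc)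
      -- the transferred small loop
      set e1 : Path (β.extend ↑(s i)) (β.extend ((i:ℝ)/n)) := psub β ↑(s i) ((i:ℝ)/n) with he1def
      set e2 : Path (β.extend (((i+1:ℕ):ℝ)/n)) (β.extend ↑(s i)) :=
        psub β (((i+1:ℕ):ℝ)/n) ↑(s i) with he2def
      set ηseg : Path (η.extend ((i:ℝ)/n)) (η.extend (((i+1:ℕ):ℝ)/n)) :=
        psub η ((i:ℝ)/n) (((i+1:ℕ):ℝ)/n) with hηsegdef
      set lam : Path (β.extend ↑(s i)) (β.extend ↑(s i)) :=
        (e1.trans ((c i).trans (ηseg.trans (c (i+1)).symm))).trans e2 with hlamdef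
      have hsIcc : ((s i : ℝ)) ∈ Set.Icc (0:ℝ) 1 := (s i).2
      have he1mem : ∀ t, e1 t ∈ V (s i) := by
        apply psub_mem β hsIcc (hℓIcc i (le_of_lt hi))
        intro r h1 h2
        apply hseg' i hi r
        · exact le_trans (le_of_eq (min_comm _ _)) h1
        · exact le_trans h2 (max_le (le_max_right _ _) (le_trans (hstep i) (le_max_left _ _)))
      have hcimem : ∀ t, c i t ∈ V (s i) := hc1 i hi
      have hηsegmem : ∀ t, ηseg t ∈ V (s i) := by
        apply psub_mem η (hℓIcc i (le_of_lt hi)) (hℓIcc (i+1) hsucc)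
        intro r h1 h2
        rw [min_eq_left (hstep i)] at h1
        rw [max_eq_right (hstep i)] at h2
        refine hη1 i hi ?_
        rw [hKdef]
        exact ⟨h1, h2⟩
      have hci1mem : ∀ t, c (i+1) t ∈ V (s i) := hc2 (i+1) i rfl hi
      have he2mem : ∀ t, e2 t ∈ V (s i) := by
        apply psub_mem β (hℓIcc (i+1) hsucc) hsIcc
        intro r h1 h2
        apply hseg' i hi r
        · exact le_trans (min_le_min (hstep i) le_rfl) h1
        · exact h2
      have hlammem : ∀ t, lam t ∈ V₀ (s i) := by
        intro t
        apply hVsub (s i)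
        exact trans_mem (trans_mem he1mem (trans_mem hcimem
          (trans_mem hηsegmem (symm_mem hci1mem)))) he2mem t
      obtain ⟨κ', hκ'U, hκ'h⟩ := hV₀trans (s i) lam hlammem
      -- morphism algebra
      have m1 : mor ((psub β 0 ↑(s i)).cast hx0β rfl) ≫ mor e1 =
          mor ((psub β 0 ((i:ℝ)/n)).cast hx0β rfl) := by
        rw [← mor_trans]
        exact mor_eq_of_homotopic (psub_trans_cast β hx0β)
      have m2 : mor ((psub β 0 (((i+1:ℕ):ℝ)/n)).cast hx0β rfl) ≫ mor e2 =
          mor ((psub β 0 ↑(s i)).cast hx0β rfl) := by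
        rw [← mor_trans]
        exact mor_eq_of_homotopic (psub_trans_cast β hx0β)
      have m3 : mor ((psub η 0 ((i:ℝ)/n)).cast η.extend_zero.symm rfl) ≫ mor ηseg =
          mor ((psub η 0 (((i+1:ℕ):ℝ)/n)).cast η.extend_zero.symm rfl) := by
        rw [← mor_trans]
        exact mor_eq_of_homotopic (psub_trans_cast η η.extend_zero.symm)
      have m4 : mor κ' = (mor ((psub β 0 ↑(s i)).cast hx0β rfl) ≫ mor lam) ≫
          inv (mor ((psub β 0 ↑(s i)).cast hx0β rfl)) := by
        rw [mor_eq_of_homotopic hκ'h, mor_trans, mor_trans, mor_symm]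
      have m5 : mor lam = (mor e1 ≫ (mor (c i) ≫ (mor ηseg ≫ inv (mor (c (i+1)))))) ≫
          mor e2 := by
        rw [hlamdef, mor_trans, mor_trans, mor_trans, mor_trans, mor_symm]
      have hIH' : mor κj =
          mor ((psub η 0 ((i:ℝ)/n)).cast η.extend_zero.symm rfl) ≫
            (inv (mor (c i)) ≫ inv (mor ((psub β 0 ((i:ℝ)/n)).cast hx0β rfl))) := by
        rw [← hIH, mor_trans, mor_trans, mor_symm, mor_symm]
      refine ⟨κj.trans κ', trans_mem hκjU hκ'U, ?_⟩
      rw [mor_trans κj κ', mor_trans, mor_trans, mor_symm, mor_symm]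
      rw [← m3, hIH', m4, m5, ← m1, ← m2]
      simp only [IsIso.inv_comp, Category.assoc, IsIso.inv_hom_id_assoc,
        IsIso.hom_inv_id_assoc, IsIso.inv_hom_id, Category.comp_id]
  obtain ⟨κ, hκU, hm⟩ := main n le_rfl
  have hnn : ((n:ℝ))/n = 1 := div_self hnR.ne'
  have hηn : η.extend ((n:ℝ)/n) = x₀ := by rw [hnn, Path.extend_one]
  have hβn : β.extend ((n:ℝ)/n) = x₀ := by rw [hnn, Path.extend_one]
  have hEηn : (psub η 0 ((n:ℝ)/n)).cast η.extend_zero.symm rfl = η.cast rfl hηn := by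
    ext t
    rw [path_cast_apply, path_cast_apply, psub_apply]
    rw [show (1-(t:ℝ))*0 + t*((n:ℝ)/n) = (t:ℝ) by rw [hnn]; ring]
    exact η.extend_extends' t
  have hEβn : (psub β 0 ((n:ℝ)/n)).cast hx0β rfl = β.cast rfl hβn := by
    ext t
    rw [path_cast_apply, path_cast_apply, psub_apply]
    rw [show (1-(t:ℝ))*0 + t*((n:ℝ)/n) = (t:ℝ) by rw [hnn]; ring]
    exact β.extend_extends' t
  have hcn : c n = (Path.refl x₀).cast hβn hηn := by
    ext t
    rw [path_cast_apply]
    exact hc3 n (Or.inr le_rfl) t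
  have hfin : mor η ≫ inv (mor β) = mor κ := by
    rw [← hm, mor_trans, mor_trans, mor_symm, mor_symm, hEηn, hEβn, hcn,
      mor_cast, mor_cast, mor_cast, mor_refl]
    simp [eqToHom_trans, eqToHom_refl, inv_eqToHom]
  have hfinal : mor η = mor (κ.trans β) := by
    rw [mor_trans, ← hfin, Category.assoc, IsIso.inv_hom_id, Category.comp_id]
  refine ⟨κ, hκU, ?_⟩
  rw [loopClass_mul]
  exact loopClass_ext hfinal
end dcore2


section whpart
variable {X : Type*} [TopologicalSpace X] {x₀ : X}


lemma loopClassesIn_one_mem {U : Set X} (hx : x₀ ∈ U) :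
    (1 : FundamentalGroup X x₀) ∈ loopClassesIn x₀ U :=
  ⟨Path.refl x₀, fun _ => hx, loopClass_one.symm⟩

lemma loopClassesIn_mul_mem {U : Set X} {g h : FundamentalGroup X x₀}
    (hg : g ∈ loopClassesIn x₀ U) (hh : h ∈ loopClassesIn x₀ U) :
    g * h ∈ loopClassesIn x₀ U := by
  obtain ⟨γ, hγU, rfl⟩ := hg
  obtain ⟨δ, hδU, rfl⟩ := hh
  refine ⟨δ.trans γ, ?_, loopClass_mul γ δ⟩
  intro t
  have := Path.trans_range δ γ
  have ht : (δ.trans γ) t ∈ Set.range (δ.trans γ) := Set.mem_range_self t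
  rw [this] at ht
  rcases ht with ⟨u, hu⟩ | ⟨u, hu⟩
  · exact hu ▸ hδU u
  · exact hu ▸ hγU u

lemma loopClassesIn_inv_mem {U : Set X} {g : FundamentalGroup X x₀}
    (hg : g ∈ loopClassesIn x₀ U) : g⁻¹ ∈ loopClassesIn x₀ U := by
  obtain ⟨γ, hγU, rfl⟩ := hg
  exact ⟨γ.symm, fun t => hγU (σ t), loopClass_inv γ⟩

lemma loopClassesIn_mono {U U' : Set X} (h : U ⊆ U') :
    loopClassesIn x₀ U ⊆ loopClassesIn (X := X) x₀ U' := by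
  rintro g ⟨γ, hγ, rfl⟩
  exact ⟨γ, fun t => h (hγ t), rfl⟩

/-- The key conjugation property coming from the SLT condition. -/
lemma slt_conj (h : IsSLTAt X x₀) {U : Set X} (hU : IsOpen U) (hx : x₀ ∈ U)
    (g : FundamentalGroup X x₀) :
    ∃ V : Set X, IsOpen V ∧ x₀ ∈ V ∧
      ∀ k ∈ loopClassesIn x₀ V, g⁻¹ * k * g ∈ loopClassesIn (X := X) x₀ U := by
  obtain ⟨α, rfl⟩ := loopClass_surjective g
  obtain ⟨V, hVopen, hxV, hV⟩ := h x₀ α U hU hx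
  refine ⟨V, hVopen, hxV, ?_⟩
  rintro k ⟨γ, hγV, rfl⟩
  obtain ⟨κ, hκU, hκ⟩ := hV γ hγV
  have : loopClass κ = (loopClass α)⁻¹ * loopClass γ * loopClass α := by
    rw [loopClass_eq_of_homotopic hκ, loopClass_inv]
    rw [mul_assoc, loopClass_mul γ α, loopClass_mul]
  exact this ▸ ⟨κ, hκU, rfl⟩

lemma wh_isOpen_coset (g : FundamentalGroup X x₀) {U : Set X} (hU : IsOpen U) (hx : x₀ ∈ U) :
    IsOpen[whTop X x₀] ((fun h => g * h) '' loopClassesIn x₀ U) :=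
  TopologicalSpace.GenerateOpen.basic _ ⟨g, U, hU, hx, rfl⟩

lemma coset_subset_coset {g k : FundamentalGroup X x₀} {U : Set X}
    (hk : k ∈ (fun h => g * h) '' loopClassesIn x₀ U) :
    (fun h => k * h) '' loopClassesIn x₀ U ⊆ (fun h => g * h) '' loopClassesIn x₀ U := by
  obtain ⟨h₀, hh₀, rfl⟩ := hk
  rintro _ ⟨h, hh, rfl⟩
  exact ⟨h₀ * h, loopClassesIn_mul_mem hh₀ hh, by simp [mul_assoc]⟩

lemma mem_own_coset {U : Set X} (g : FundamentalGroup X x₀) (hx : x₀ ∈ U) :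
    g ∈ (fun h => g * h) '' loopClassesIn x₀ U :=
  ⟨1, loopClassesIn_one_mem hx, mul_one g⟩

lemma wh_isOpen_iff {S : Set (FundamentalGroup X x₀)} :
    IsOpen[whTop X x₀] S ↔ ∀ g ∈ S, ∃ U : Set X, IsOpen U ∧ x₀ ∈ U ∧
      (fun h => g * h) '' loopClassesIn x₀ U ⊆ S := by
  constructor
  · intro hS
    induction hS with
    | basic S hS =>
      obtain ⟨g', U, hU, hx, rfl⟩ := hS
      intro k hk
      exact ⟨U, hU, hx, coset_subset_coset hk⟩
    | univ => exact fun g _ => ⟨Set.univ, isOpen_univ, Set.mem_univ _, Set.subset_univ _⟩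
    | inter S₁ S₂ _ _ ih₁ ih₂ =>
      intro g hg
      obtain ⟨U₁, hU₁, hx₁, h₁⟩ := ih₁ g hg.1
      obtain ⟨U₂, hU₂, hx₂, h₂⟩ := ih₂ g hg.2
      refine ⟨U₁ ∩ U₂, hU₁.inter hU₂, ⟨hx₁, hx₂⟩, fun k hk => ?_⟩
      obtain ⟨h, hh, rfl⟩ := hk
      exact ⟨h₁ ⟨h, loopClassesIn_mono Set.inter_subset_left hh, rfl⟩,
        h₂ ⟨h, loopClassesIn_mono Set.inter_subset_right hh, rfl⟩⟩
    | sUnion 𝒮 _ ih =>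
      rintro g ⟨S', hS', hg⟩
      obtain ⟨U, hU, hx, hsub⟩ := ih S' hS' g hg
      exact ⟨U, hU, hx, hsub.trans (Set.subset_sUnion_of_mem hS')⟩
  · intro H
    choose U hUopen hUx hUsub using H
    have : S = ⋃₀ { T | ∃ g, ∃ hg : g ∈ S, T = (fun h => g * h) '' loopClassesIn x₀ (U g hg) } := by
      apply Set.Subset.antisymm
      · intro g hg
        exact ⟨_, ⟨g, hg, rfl⟩, mem_own_coset g (hUx g hg)⟩
      · intro k hk
        obtain ⟨T, ⟨g, hg, rfl⟩, hkT⟩ := hk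
        exact hUsub g hg hkT
    rw [this]
    apply TopologicalSpace.GenerateOpen.sUnion
    rintro T ⟨g, hg, rfl⟩
    exact wh_isOpen_coset g (hUopen g hg) (hUx g hg)

theorem wh_topologicalGroup (h : IsSLTAt X x₀) :
    @IsTopologicalGroup (FundamentalGroup X x₀) (whTop X x₀) _ := by
  letI := whTop X x₀
  refine { continuous_mul := ?_, continuous_inv := ?_ }
  · -- continuous mul
    rw [continuous_def]
    intro S hS
    rw [isOpen_prod_iff]
    intro a b hab
    obtain ⟨U, hUopen, hUx, hUsub⟩ := wh_isOpen_iff.mp hS _ hab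
    obtain ⟨V, hVopen, hVx, hVconj⟩ := slt_conj h hUopen hUx b
    refine ⟨(fun h => a * h) '' loopClassesIn x₀ V, (fun h => b * h) '' loopClassesIn x₀ U,
      wh_isOpen_coset a hVopen hVx, wh_isOpen_coset b hUopen hUx,
      mem_own_coset a hVx, mem_own_coset b hUx, ?_⟩
    rintro ⟨p, q⟩ ⟨⟨h₁, hh₁, rfl⟩, ⟨h₂, hh₂, rfl⟩⟩
    apply hUsub
    refine ⟨(b⁻¹ * h₁ * b) * h₂, loopClassesIn_mul_mem (hVconj h₁ hh₁) hh₂, ?_⟩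
    show a * b * (b⁻¹ * h₁ * b * h₂) = a * h₁ * (b * h₂)
    group
  · -- continuous inv
    rw [continuous_def]
    intro S hS
    rw [wh_isOpen_iff]
    intro a ha
    obtain ⟨U, hUopen, hUx, hUsub⟩ := wh_isOpen_iff.mp hS _ ha
    obtain ⟨V, hVopen, hVx, hVconj⟩ := slt_conj h hUopen hUx a⁻¹
    refine ⟨V, hVopen, hVx, ?_⟩
    rintro _ ⟨k, hk, rfl⟩
    show (a * k)⁻¹ ∈ S
    apply hUsub
    refine ⟨a * k⁻¹ * a⁻¹, ?_, ?_⟩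
    · have := hVconj k⁻¹ (loopClassesIn_inv_mem hk)
      simpa using this
    · show a⁻¹ * (a * k⁻¹ * a⁻¹) = (a * k)⁻¹
      group


lemma exists_nbhd_of_refl_mem {O : Set (Path x₀ x₀)} (hO : IsOpen O)
    (hrefl : Path.refl x₀ ∈ O) :
    ∃ U : Set X, IsOpen U ∧ x₀ ∈ U ∧ ∀ δ : Path x₀ x₀, (∀ t, δ t ∈ U) → δ ∈ O := by
  obtain ⟨O', hO', hOeq⟩ := isOpen_induced_iff.mp hO
  have hbasis := TopologicalSpace.isTopologicalBasis_of_subbasis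
    (ContinuousMap.compactOpen_eq (X := I) (Y := X))
  have hmem : (Path.refl x₀).toContinuousMap ∈ O' := by
    rw [← hOeq] at hrefl; exact hrefl
  obtain ⟨b, ⟨f, hf, rfl⟩, hb, hbsub⟩ := hbasis.exists_subset_of_mem_open hmem hO'
  obtain ⟨hffin, hfsub⟩ := hf
  have hV : ∀ s ∈ f, ∃ V : Set X, IsOpen V ∧ x₀ ∈ V ∧
      ∀ δ : Path x₀ x₀, (∀ t, δ t ∈ V) → δ.toContinuousMap ∈ s := by
    intro s hs
    obtain ⟨K, hK, V, hVopen, rfl⟩ := hfsub hs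
    rcases Set.eq_empty_or_nonempty K with rfl | ⟨k, hk⟩
    · exact ⟨Set.univ, isOpen_univ, Set.mem_univ _, fun δ _ =>
        by simp [Set.mapsTo_empty_iff]; exact Set.mapsTo_empty _ _⟩
    · have hx₀V : x₀ ∈ V := Set.mem_sInter.mp hb _ hs hk
      exact ⟨V, hVopen, hx₀V, fun δ hδ k _ => hδ k⟩
  choose V hVopen hVx hVsub using hV
  haveI := hffin.to_subtype
  refine ⟨⋂ s : f, V s s.2, isOpen_iInter_of_finite (fun s => hVopen s s.2),
    Set.mem_iInter.mpr (fun s => hVx s s.2), ?_⟩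
  intro δ hδ
  rw [← hOeq]
  apply hbsub
  refine Set.mem_sInter.mpr (fun s hs => ?_)
  exact hVsub s hs δ (fun t => Set.mem_iInter.mp (hδ t) ⟨s, hs⟩)


lemma qtop_isOpen_iff {S : Set (FundamentalGroup X x₀)} :
    IsOpen[qtop X x₀] S ↔ IsOpen ((fun γ : Path x₀ x₀ => loopClass γ) ⁻¹' S) :=
  isOpen_coinduced

/-- Every `qtop`-open set satisfies the whisker-coset openness criterion. -/
lemma qtop_open_wh_criterion {S : Set (FundamentalGroup X x₀)}
    (hS : IsOpen[qtop X x₀] S) :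
    ∀ g ∈ S, ∃ U : Set X, IsOpen U ∧ x₀ ∈ U ∧
      (fun h => g * h) '' loopClassesIn x₀ U ⊆ S := by
  intro g hg
  obtain ⟨β, rfl⟩ := loopClass_surjective g
  have hP : IsOpen ((fun γ : Path x₀ x₀ => loopClass γ) ⁻¹' S) := qtop_isOpen_iff.mp hS
  have hcont : Continuous (fun δ : Path x₀ x₀ => δ.trans β) :=
    Path.continuous_trans.comp (continuous_id.prodMk continuous_const)
  have hO : IsOpen ((fun δ : Path x₀ x₀ => δ.trans β) ⁻¹' ((fun γ => loopClass γ) ⁻¹' S)) :=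
    hP.preimage hcont
  have hreflO : Path.refl x₀ ∈ (fun δ : Path x₀ x₀ => δ.trans β) ⁻¹' ((fun γ => loopClass γ) ⁻¹' S) := by
    show loopClass ((Path.refl x₀).trans β) ∈ S
    rw [loopClass_eq_of_homotopic ⟨Path.Homotopy.reflTrans β⟩]
    exact hg
  obtain ⟨U, hUopen, hUx, hUsub⟩ := exists_nbhd_of_refl_mem hO hreflO
  refine ⟨U, hUopen, hUx, ?_⟩
  rintro _ ⟨k, ⟨δ, hδU, rfl⟩, rfl⟩
  show loopClass β * loopClass δ ∈ S
  rw [loopClass_mul]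
  exact hUsub δ hδU

end whpart
end Auxiliary

/-- For a connected, locally path connected space, if `X` is SLT at `x₀` then
both `π₁^{qtop}(X, x₀)` and `π₁^{wh}(X, x₀)` are topological groups. -/
theorem slt_topologicalGroups {X : Type*} [TopologicalSpace X] [ConnectedSpace X]
    [LocallyPathConnectedSpace X] (x₀ : X) (h : IsSLTAt X x₀) :
    @IsTopologicalGroup (FundamentalGroup X x₀) (qtop X x₀) _ ∧
      @IsTopologicalGroup (FundamentalGroup X x₀) (whTop X x₀) _ := by
  have hwh : @IsTopologicalGroup (FundamentalGroup X x₀) (whTop X x₀) _ :=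
    wh_topologicalGroup h
  have heq : qtop X x₀ = whTop X x₀ := by
    apply le_antisymm
    · apply le_generateFrom (t := qtop X x₀)
      rintro S ⟨g, U, hUopen, hUx, rfl⟩
      rw [qtop_isOpen_iff, isOpen_iff_forall_mem_open]
      intro β hβ
      obtain ⟨N, hNopen, hβN, hN⟩ := slt_transfer_nbhd h β hUopen hUx
      refine ⟨N, ?_, hNopen, hβN⟩
      intro η hηN
      obtain ⟨κ, hκU, hκeq⟩ := hN η hηN
      show loopClass η ∈ (fun h => g * h) '' loopClassesIn x₀ U
      obtain ⟨h₀, hh₀, hβeq⟩ := hβ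
      refine ⟨h₀ * loopClass κ, loopClassesIn_mul_mem hh₀ ⟨κ, hκU, rfl⟩, ?_⟩
      show g * (h₀ * loopClass κ) = loopClass η
      have hβeq' : g * h₀ = loopClass β := hβeq
      rw [hκeq, ← hβeq', mul_assoc]
    · -- whisker topology is finer than the quotient topology
      intro S hS
      rw [wh_isOpen_iff]
      exact qtop_open_wh_criterion hS
  constructor
  · rw [heq]; exact hwh
  · exact hwh
end

section
/- Let X be a topological space and x₀ ∈ X. If the whisker topology and the quotient topology on the fundamental group coincide, i.e., π₁^{wh}(X, x₀) = π₁^{qtop}(X, x₀) as topological spaces, then X is a small loop transfer space at x₀ with respect to loops (SLTL at x₀). -/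
open TopologicalSpace

attribute [local instance] Path.Homotopic.setoid

section Aux

open CategoryTheory

lemma loopClass_eq_of_homotopic_s6 {X : Type*} [TopologicalSpace X] {x : X} {γ γ' : Path x x}
    (h : γ.Homotopic γ') : loopClass γ = loopClass γ' := by
  unfold loopClass
  exact congrArg _ (Quotient.sound h)

lemma homotopic_of_loopClass_eq {X : Type*} [TopologicalSpace X] {x : X} {γ γ' : Path x x}
    (h : loopClass γ = loopClass γ') : γ.Homotopic γ' :=
  Quotient.exact (s := Path.Homotopic.setoid x x) h

lemma exists_V_of_finite {X : Type*} [TopologicalSpace X] (x₀ : X)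
    (T : Set (Set C(unitInterval, X))) (hTfin : T.Finite)
    (hTsub : T ⊆ Set.image2 (fun K U ↦ {f | Set.MapsTo f K U})
      {K | IsCompact K} {U | IsOpen U})
    (hf : ∀ s ∈ T, ((Path.refl x₀ : Path x₀ x₀) : C(unitInterval, X)) ∈ s) :
    ∃ V : Set X, IsOpen V ∧ x₀ ∈ V ∧
      ∀ γ : Path x₀ x₀, (∀ t, γ t ∈ V) → ∀ s ∈ T, (γ : C(unitInterval, X)) ∈ s := by
  classical
  have hT' : ∀ s ∈ T, ∃ (K : Set unitInterval) (Uo : Set X),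
      IsCompact K ∧ IsOpen Uo ∧ s = {g : C(unitInterval, X) | Set.MapsTo g K Uo} := by
    intro s hs
    obtain ⟨K, hK, Uo, hUo, hEq⟩ := hTsub hs
    exact ⟨K, Uo, hK, hUo, hEq.symm⟩
  choose! K Uo hK hUo hEq using hT'
  refine ⟨⋂ s ∈ T, (if x₀ ∈ Uo s then Uo s else Set.univ), ?_, ?_, ?_⟩
  · exact hTfin.isOpen_biInter (fun s hs => by
      split_ifs with h
      · exact hUo s hs
      · exact isOpen_univ)
  · refine Set.mem_biInter (fun s hs => ?_)
    split_ifs with h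
    · exact h
    · exact Set.mem_univ _
  · intro γ hγ s hs
    rw [hEq s hs]
    intro k hk
    have hx₀ : x₀ ∈ Uo s := by
      have := hf s hs
      rw [hEq s hs] at this
      simpa using this hk
    have := hγ k
    have hsub := Set.biInter_subset_of_mem (s := T)
      (t := fun s => (if x₀ ∈ Uo s then Uo s else Set.univ)) hs
    have : γ k ∈ (if x₀ ∈ Uo s then Uo s else Set.univ) := hsub (hγ k)
    rwa [if_pos hx₀] at this

end Aux

/-- If the whisker topology and the quotient topology on the fundamental group
coincide, then `X` is SLTL at `x₀`. -/
theorem sltl_of_wh_eq_qtop {X : Type*} [TopologicalSpace X] (x₀ : X)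
    (h : whTop X x₀ = qtop X x₀) : IsSLTLAt X x₀ := by
  intro α U hU hx₀U
  -- the coset `loopClassesIn x₀ U` is whisker-open, hence qtop-open
  have hWwh : @IsOpen _ (whTop X x₀) (loopClassesIn x₀ U) := by
    exact TopologicalSpace.isOpen_generateFrom_of_mem ⟨1, U, hU, hx₀U, by simp⟩
  have hWq : @IsOpen _ (qtop X x₀) (loopClassesIn x₀ U) := h ▸ hWwh
  have hN : IsOpen ((fun γ : Path x₀ x₀ => loopClass γ) ⁻¹' loopClassesIn x₀ U) :=
    isOpen_coinduced.mp hWq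
  -- conjugation along α is continuous
  set F : Path x₀ x₀ → Path x₀ x₀ := fun γ => (α.trans γ).trans α.symm with hFdef
  have hFcont : Continuous F :=
    (continuous_const.path_trans continuous_id).path_trans continuous_const
  have hNF : IsOpen (F ⁻¹' ((fun γ : Path x₀ x₀ => loopClass γ) ⁻¹' loopClassesIn x₀ U)) :=
    hN.preimage hFcont
  -- the constant loop belongs to this open set
  have hreflmem : Path.refl x₀ ∈
      F ⁻¹' ((fun γ : Path x₀ x₀ => loopClass γ) ⁻¹' loopClassesIn x₀ U) := by
    have h1 : ((α.trans (Path.refl x₀)).trans α.symm).Homotopic (α.trans α.symm) :=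
      Path.Homotopic.hcomp ⟨Path.Homotopy.transRefl α⟩ (Path.Homotopic.refl _)
    have h2 : (α.trans α.symm).Homotopic (Path.refl x₀) :=
      ⟨(Path.Homotopy.reflTransSymm α).symm⟩
    refine ⟨Path.refl x₀, fun t => by simpa using hx₀U, ?_⟩
    exact loopClass_eq_of_homotopic_s6 (h1.trans h2)
  -- pass to the compact-open topology on C(I, X)
  obtain ⟨O, hO, hOeq⟩ := isOpen_induced_iff.mp hNF
  have hbasis := TopologicalSpace.isTopologicalBasis_of_subbasis
    (ContinuousMap.compactOpen_eq (X := unitInterval) (Y := X))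
  have hfO : ((Path.refl x₀ : Path x₀ x₀) : C(unitInterval, X)) ∈ O := by
    have : Path.refl x₀ ∈ ((↑) : Path x₀ x₀ → C(unitInterval, X)) ⁻¹' O := by
      rw [hOeq]; exact hreflmem
    exact this
  obtain ⟨t, ⟨T, ⟨hTfin, hTsub⟩, rfl⟩, hft, htO⟩ := hbasis.exists_subset_of_mem_open hfO hO
  have hfT : ∀ s ∈ T, ((Path.refl x₀ : Path x₀ x₀) : C(unitInterval, X)) ∈ s :=
    fun s hs => hft s hs
  obtain ⟨V, hVopen, hx₀V, hVprop⟩ := exists_V_of_finite x₀ T hTfin hTsub hfT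
  refine ⟨V, hVopen, hx₀V, ?_⟩
  intro γ hγV
  have hγO : (γ : C(unitInterval, X)) ∈ O := htO (fun s hs => hVprop γ hγV s hs)
  have hγN : γ ∈ F ⁻¹' ((fun γ : Path x₀ x₀ => loopClass γ) ⁻¹' loopClassesIn x₀ U) := by
    rw [← hOeq]; exact hγO
  obtain ⟨γ', hγ'U, hγ'cls⟩ := hγN
  exact ⟨γ', hγ'U, homotopic_of_loopClass_eq hγ'cls.symm⟩
end

section
/- Let X be a topological space and x₀ ∈ X. Suppose X is SLTL at x₀ and for every point x ∈ X there exists a path α_x from x₀ to x that is an SLT path. Then X is a small loop transfer space at x₀ (i.e., every path starting at x₀ is an SLT path). -/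
open TopologicalSpace

attribute [local instance] Path.Homotopic.setoid

open CategoryTheory in
private lemma slt_key {X : Type*} [TopologicalSpace X] {a b : X} (α β : Path a b)
    (γ : Path b b) (γ'' γ' : Path a a)
    (h2 : γ''.Homotopic ((β.trans γ).trans β.symm))
    (h1 : γ'.Homotopic ((((α.trans β.symm).trans γ'').trans (α.trans β.symm).symm))) :
    γ'.Homotopic ((α.trans γ).trans α.symm) := by
  let A : (⟨a⟩ : FundamentalGroupoid X) ⟶ ⟨b⟩ := ⟦α⟧
  let B : (⟨a⟩ : FundamentalGroupoid X) ⟶ ⟨b⟩ := ⟦β⟧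
  let G : (⟨b⟩ : FundamentalGroupoid X) ⟶ ⟨b⟩ := ⟦γ⟧
  have e2 : (⟦γ''⟧ : (⟨a⟩ : FundamentalGroupoid X) ⟶ ⟨a⟩) = (B ≫ G) ≫ Groupoid.inv B :=
    Quotient.sound h2
  refine Quotient.exact (?_ : (⟦γ'⟧ : Path.Homotopic.Quotient a a) =
      ⟦(α.trans γ).trans α.symm⟧)
  have e1 : (⟦γ'⟧ : (⟨a⟩ : FundamentalGroupoid X) ⟶ ⟨a⟩) =
      ((A ≫ Groupoid.inv B) ≫ ⟦γ''⟧) ≫ Groupoid.inv (A ≫ Groupoid.inv B) :=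
    Quotient.sound h1
  show (⟦γ'⟧ : (⟨a⟩ : FundamentalGroupoid X) ⟶ ⟨a⟩) = (A ≫ G) ≫ Groupoid.inv A
  rw [e1, e2]
  simp [Groupoid.inv_eq_inv]
  rfl

/-- If `X` is SLTL at `x₀` and every point of `X` is the endpoint of some SLT
path starting at `x₀`, then `X` is SLT at `x₀`. -/
theorem slt_of_sltl_of_sltPaths {X : Type*} [TopologicalSpace X] (x₀ : X)
    (hsltl : IsSLTLAt X x₀)
    (hpaths : ∀ x : X, ∃ α : Path x₀ x, IsSLTPath α) :
    IsSLTAt X x₀ := by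
  intro x₁ α U hU hx₀U
  obtain ⟨β, hβ⟩ := hpaths x₁
  obtain ⟨W, hWopen, hWx, hWtrans⟩ := hsltl (α.trans β.symm) U hU hx₀U
  obtain ⟨V, hVopen, hVx, hVtrans⟩ := hβ W hWopen hWx
  refine ⟨V, hVopen, hVx, fun γ hγ => ?_⟩
  obtain ⟨γ'', hγ''W, hγ''hom⟩ := hVtrans γ hγ
  obtain ⟨γ', hγ'U, hγ'hom⟩ := hWtrans γ'' hγ''W
  exact ⟨γ', hγ'U, slt_key α β γ γ'' γ' hγ''hom hγ'hom⟩
end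

section
/- Let X be a connected, locally path connected topological space that is a small loop transfer space (SLT at every point), and let x₀ ∈ X. If π₁^{qtop}(X, x₀) is an indiscrete topological group (its only open subsets are the empty set and the whole group), then X is a small loop space, i.e., for every x ∈ X every loop based at x is a small loop. -/
open TopologicalSpace

attribute [local instance] Path.Homotopic.setoid

section SLTInfra
open Set unitInterval

namespace SLTAux

variable {X : Type*} [TopologicalSpace X]

/-- Convex combination in the unit interval. -/
noncomputable def line (a b t : I) : I :=
  ⟨(1 - (t:ℝ)) * a + t * b, by
    constructor
    · nlinarith [a.2.1, b.2.1, t.2.1, t.2.2]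
    · nlinarith [a.2.2, b.2.2, t.2.1, t.2.2]⟩

@[simp] lemma line_zero (a b : I) : line a b 0 = a := by
  apply Subtype.ext; simp [line]

@[simp] lemma line_one (a b : I) : line a b 1 = b := by
  apply Subtype.ext; simp [line]

@[simp] lemma line_self (a t : I) : line a a t = a := by
  apply Subtype.ext; simp [line]; ring

lemma line_coe (a b t : I) : (line a b t : ℝ) = (1 - (t:ℝ)) * a + t * b := rfl

lemma continuous_line {Y : Type*} [TopologicalSpace Y] {fa fb ft : Y → I}
    (ha : Continuous fa) (hb : Continuous fb) (ht : Continuous ft) :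
    Continuous fun y => line (fa y) (fb y) (ft y) := by
  apply Continuous.subtype_mk
  fun_prop

/-- The straight path in `I` from `a` to `b`. -/
noncomputable def segI (a b : I) : Path a b where
  toFun t := line a b t
  continuous_toFun := continuous_line continuous_const continuous_const continuous_id
  source' := line_zero a b
  target' := line_one a b

@[simp] lemma segI_apply (a b t : I) : segI a b t = line a b t := rfl

/-- The subsegment of a path from parameter `a` to parameter `b`. -/
noncomputable def seg {x y : X} (γ : Path x y) (a b : I) : Path (γ a) (γ b) where
  toFun t := γ (line a b t)
  continuous_toFun := γ.continuous.comp (continuous_line continuous_const continuous_const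
    continuous_id)
  source' := by simp
  target' := by simp

@[simp] lemma seg_apply {x y : X} (γ : Path x y) (a b t : I) : seg γ a b t = γ (line a b t) := rfl

/-- `P` factors through `γ` via the parameter path `G`. -/
def Factors {x y u v : X} {a b : I} (γ : Path x y) (P : Path u v) (G : Path a b) : Prop :=
  ∀ t, P t = γ (G t)

lemma factors_seg {x y : X} (γ : Path x y) (a b : I) : Factors γ (seg γ a b) (segI a b) :=
  fun _ => rfl

lemma Factors.trans {x y u v w : X} {a b c : I} {γ : Path x y} {P : Path u v} {Q : Path v w}
    {G : Path a b} {H : Path b c} (hP : Factors γ P G) (hQ : Factors γ Q H) :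
    Factors γ (P.trans Q) (G.trans H) := by
  intro t
  rw [Path.trans_apply, Path.trans_apply]
  split_ifs <;> [exact hP _; exact hQ _]

lemma Factors.symm {x y u v : X} {a b : I} {γ : Path x y} {P : Path u v} {G : Path a b}
    (hP : Factors γ P G) : Factors γ P.symm G.symm := by
  intro t
  show P (σ t) = γ (G (σ t))
  exact hP (σ t)

end SLTAux

namespace SLTAux2
open SLTAux
variable {X : Type*} [TopologicalSpace X]

/-- Two paths factoring through the same path `γ` with the same parameter endpoints
are homotopic (straight-line homotopy in the parameter). -/
theorem Factors.homotopic {x y u v : X} {a b : I} {γ : Path x y} {P Q : Path u v}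
    {G H : Path a b} (hP : SLTAux.Factors γ P G) (hQ : SLTAux.Factors γ Q H) :
    P.Homotopic Q := by
  refine ⟨⟨⟨⟨fun p => γ (line (G p.2) (H p.2) p.1), ?_⟩, ?_, ?_⟩, ?_⟩⟩
  · exact γ.continuous.comp (continuous_line (G.continuous.comp continuous_snd)
      (H.continuous.comp continuous_snd) continuous_fst)
  · intro t
    simp only [ContinuousMap.coe_mk, line_zero]
    exact (hP t).symm
  · intro t
    simp only [ContinuousMap.coe_mk, line_one]
    exact (hQ t).symm
  · intro s t ht
    simp only [Set.mem_insert_iff, Set.mem_singleton_iff] at ht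
    rcases ht with rfl | rfl
    · simp only [ContinuousMap.coe_mk, G.source, H.source, line_self]
      show γ a = P 0
      rw [← G.source]
      exact (hP 0).symm
    · simp only [ContinuousMap.coe_mk, G.target, H.target, line_self]
      show γ b = P 1
      rw [← G.target]
      exact (hP 1).symm

end SLTAux2

namespace SLTAux3
open SLTAux CategoryTheory
variable {X : Type*} [TopologicalSpace X]

lemma groupoid_calc {G : Type*} [Groupoid G] {z u u' v v' w : G}
    (a : z ⟶ u) (a' : z ⟶ u') (as : z ⟶ w) (rr : w ⟶ u) (e : u ⟶ u')
    (e' : v ⟶ v') (b : u' ⟶ v') (sg : u ⟶ v) (a2 : z ⟶ v) (a2' : z ⟶ v')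
    (h1 : as ≫ rr = a) (h2 : a ≫ sg = a2) (h3 : a' ≫ b = a2') :
    (a' ≫ Groupoid.inv e ≫ Groupoid.inv a) ≫
      ((as ≫ (rr ≫ ((e ≫ b ≫ Groupoid.inv e' ≫ Groupoid.inv sg) ≫ Groupoid.inv rr))) ≫
        Groupoid.inv as) =
    a2' ≫ Groupoid.inv e' ≫ Groupoid.inv a2 := by
  subst h2 h3
  subst h1
  simp [Groupoid.inv_eq_inv]

/-- A path class, as a morphism of the fundamental groupoid. -/
noncomputable def hcast {x y : X} (p : Path x y) :
    FundamentalGroupoid.mk x ⟶ FundamentalGroupoid.mk y := ⟦p⟧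

lemma hcast_trans {x y z : X} (p : Path x y) (q : Path y z) :
    hcast (p.trans q) = hcast p ≫ hcast q := rfl

lemma hcast_symm {x y : X} (p : Path x y) :
    hcast p.symm = Groupoid.inv (hcast p) := rfl

lemma hcast_refl (x : X) : hcast (Path.refl x) = 𝟙 (FundamentalGroupoid.mk x) := rfl

lemma hcast_sound {x y : X} {p q : Path x y} (h : p.Homotopic q) : hcast p = hcast q :=
  Quotient.sound h

lemma hcast_exact {x y : X} {p q : Path x y} (h : hcast p = hcast q) : p.Homotopic q :=
  Quotient.exact h

theorem step_homotopic {z u u' v v' w : X}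
    (A : Path z u) (A' : Path z u') (As : Path z w) (rr : Path w u) (e : Path u u')
    (e' : Path v v') (b : Path u' v') (sg : Path u v) (A2 : Path z v) (A2' : Path z v')
    (h1 : (As.trans rr).Homotopic A) (h2 : (A.trans sg).Homotopic A2)
    (h3 : (A'.trans b).Homotopic A2') :
    ((A'.trans (e.symm.trans A.symm)).trans
        ((As.trans (rr.trans ((e.trans (b.trans (e'.symm.trans sg.symm))).trans rr.symm))).trans
          As.symm)).Homotopic
      (A2'.trans (e'.symm.trans A2.symm)) := by
  apply hcast_exact
  simp only [hcast_trans, hcast_symm]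
  exact groupoid_calc _ _ _ _ _ _ _ _ _ _ (hcast_sound h1) (hcast_sound h2) (hcast_sound h3)

theorem final_step {z u u' : X} (D D' : Path z z) (A : Path z u) (A' : Path z u')
    (e : Path u u') (ζ : Path z z)
    (hA : ∀ t, A t = D t) (hA' : ∀ t, A' t = D' t) (he : ∀ t, e t = z)
    (hζ : ζ.Homotopic (A'.trans (e.symm.trans A.symm))) :
    D'.Homotopic (ζ.trans D) := by
  have hu : z = u := by rw [← A.target, hA 1, D.target]
  have hu' : z = u' := by rw [← A'.target, hA' 1, D'.target]
  subst hu hu'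
  have hAD : A = D := Path.ext (funext hA)
  have hAD' : A' = D' := Path.ext (funext hA')
  have her : e = Path.refl _ := Path.ext (funext he)
  subst hAD hAD' her
  apply hcast_exact
  have h2 := hcast_sound hζ
  simp only [hcast_trans, hcast_symm, hcast_refl] at h2 ⊢
  rw [h2]
  simp [Groupoid.inv_eq_inv]

theorem conj_homotopic {x y : X} (p : Path x y) (γ : Path x x) :
    ((p.trans ((p.symm.trans γ).trans p)).trans p.symm).Homotopic γ := by
  apply hcast_exact
  simp only [hcast_trans, hcast_symm]
  simp [Groupoid.inv_eq_inv]

theorem homotopic_refl_of_const {x : X} {P : Path x x} (h : ∀ t, P t = x) :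
    (Path.refl x).Homotopic P := by
  have h1 : SLTAux.Factors (Path.refl x) (Path.refl x) (Path.refl (0 : I)) := fun _ => rfl
  have h2 : SLTAux.Factors (Path.refl x) P (Path.refl (0 : I)) := fun t => h t
  exact SLTAux2.Factors.homotopic h1 h2

end SLTAux3

namespace SLTAux4
open SLTAux SLTAux2 SLTAux3
variable {X : Type*} [TopologicalSpace X]

lemma forall_trans_mem {x y z : X} {p : Path x y} {q : Path y z} {S : Set X}
    (hp : ∀ t, p t ∈ S) (hq : ∀ t, q t ∈ S) : ∀ t, (p.trans q) t ∈ S := by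
  intro t
  rw [Path.trans_apply]
  split_ifs
  exacts [hp _, hq _]

lemma forall_symm_mem {x y : X} {p : Path x y} {S : Set X}
    (hp : ∀ t, p t ∈ S) : ∀ t, p.symm t ∈ S := fun t => hp (σ t)

lemma forall_trans_eq {x y z w : X} {p : Path x y} {q : Path y z}
    (hp : ∀ t, p t = w) (hq : ∀ t, q t = w) : ∀ t, (p.trans q) t = w := by
  intro t
  rw [Path.trans_apply]
  split_ifs
  exacts [hp _, hq _]

lemma forall_symm_eq {x y w : X} {p : Path x y}
    (hp : ∀ t, p t = w) : ∀ t, p.symm t = w := fun t => hp (σ t)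

lemma line_mem_Icc {a b : I} (hab : a ≤ b) (t : I) : line a b t ∈ Set.Icc a b := by
  have ha := t.2.1
  have hb := t.2.2
  have hab' : (a : ℝ) ≤ b := hab
  constructor
  · rw [← Subtype.coe_le_coe, line_coe]
    nlinarith
  · rw [← Subtype.coe_le_coe, line_coe]
    nlinarith

lemma line_dist (a b t : I) : dist (line a b t) a ≤ dist b a := by
  rw [Subtype.dist_eq, Subtype.dist_eq, line_coe, Real.dist_eq, Real.dist_eq]
  have h1 : (1 - (t:ℝ)) * a + t * b - a = t * ((b:ℝ) - a) := by ring
  rw [h1, abs_mul, abs_of_nonneg t.2.1]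
  exact mul_le_of_le_one_left (abs_nonneg _) t.2.2

lemma line_zero_one (t : I) : line 0 1 t = t := by
  apply Subtype.ext
  simp [line_coe]

end SLTAux4

section BigLemma
open Set unitInterval SLTAux SLTAux2 SLTAux3 SLTAux4

theorem isOpen_setOf_homotopic_loopIn {X : Type*} [TopologicalSpace X] [LocallyPathConnectedSpace X]
    {x₀ : X} (hslt : IsSLTAt X x₀) {V : Set X} (hV : IsOpen V) (hx₀V : x₀ ∈ V) :
    IsOpen {δ : Path x₀ x₀ | ∃ γ : Path x₀ x₀, (∀ t, γ t ∈ V) ∧ δ.Homotopic γ} := by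
  rw [isOpen_iff_forall_mem_open]
  rintro δ ⟨γ₀, hγ₀V, hδγ₀⟩
  set A : ∀ t : I, Path x₀ (δ t) := fun t => (seg δ 0 t).cast δ.source.symm rfl with hA
  have hAfac : ∀ t : I, Factors δ (A t) (segI 0 t) := by
    intro t u
    show ((seg δ 0 t).cast δ.source.symm rfl) u = _
    rw [Path.cast_coe]
    rfl
  -- SLT data along δ
  obtain ⟨W, hWopen, hWmem, hWtr⟩ :
      ∃ W : I → Set X, (∀ t, IsOpen (W t)) ∧ (∀ t, δ t ∈ W t) ∧
        ∀ t, ∀ γ : Path (δ t) (δ t), (∀ u, γ u ∈ W t) →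
          ∃ γ' : Path x₀ x₀, (∀ u, γ' u ∈ V) ∧
            γ'.Homotopic (((A t).trans γ).trans (A t).symm) := by
    choose W h1 h2 h3 using fun t => hslt (δ t) (A t) V hV hx₀V
    exact ⟨W, h1, h2, h3⟩
  set W' : I → Set X := fun t => pathComponentIn (W t) (δ t) with hW'
  have hW'open : ∀ t, IsOpen (W' t) := fun t => (hWopen t).pathComponentIn _
  have hW'mem : ∀ t, δ t ∈ W' t := fun t => mem_pathComponentIn_self (hWmem t)
  have hW'sub : ∀ t, W' t ⊆ W t := fun t => pathComponentIn_subset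
  -- radii
  obtain ⟨ε, hεpos, hεball⟩ : ∃ ε : I → ℝ, (∀ t, 0 < ε t) ∧
      ∀ t, Metric.ball t (ε t) ⊆ δ ⁻¹' (W' t) := by
    have h : ∀ t : I, δ ⁻¹' (W' t) ∈ nhds t :=
      fun t => ((hW'open t).preimage δ.continuous).mem_nhds (hW'mem t)
    choose ε h1 h2 using fun t => Metric.mem_nhds_iff.mp (h t)
    exact ⟨ε, h1, h2⟩
  -- Lebesgue number
  obtain ⟨L, hLpos, hLnum⟩ :=
    lebesgue_number_lemma_of_metric (isCompact_univ (X := I))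
      (fun t : I => Metric.isOpen_ball)
      (fun u _ => Set.mem_iUnion.mpr ⟨u, Metric.mem_ball_self (half_pos (hεpos u))⟩)
  -- subdivision
  obtain ⟨n, hn⟩ := exists_nat_one_div_lt hLpos
  set m : ℕ := n + 1 with hm
  have hmpos : 0 < m := Nat.succ_pos n
  have hmR : (0:ℝ) < m := by positivity
  have hLm : 1 / (m:ℝ) < L := by
    rw [hm]
    push_cast
    convert hn using 2
  set τ : ℕ → I := fun i => ⟨min ((i:ℝ) / m) 1,
    ⟨le_min (by positivity) zero_le_one, min_le_right _ _⟩⟩ with hτ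
  have hτcoe : ∀ i ≤ m, (τ i : ℝ) = (i:ℝ) / m := by
    intro i hi
    show min ((i:ℝ)/m) 1 = (i:ℝ)/m
    rw [min_eq_left]
    rw [div_le_one hmR]
    exact_mod_cast hi
  have hτ0 : τ 0 = 0 := by
    apply Subtype.ext
    simp [hτ]
  have hτm : ∀ i, m ≤ i → τ i = 1 := by
    intro i hi
    apply Subtype.ext
    show min ((i:ℝ)/m) 1 = 1
    rw [min_eq_right]
    rw [le_div_iff₀ hmR, one_mul]
    exact_mod_cast hi
  have hτmono : ∀ i, τ i ≤ τ (i + 1) := by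
    intro i
    rw [← Subtype.coe_le_coe]
    show min ((i:ℝ)/m) 1 ≤ min (((i+1:ℕ):ℝ)/m) 1
    push_cast
    gcongr
    linarith
  have hdistτ : ∀ i, i + 1 ≤ m → ∀ w ∈ Icc (τ i) (τ (i+1)), dist w (τ i) < L := by
    intro i hi w hw
    rw [Subtype.dist_eq, Real.dist_eq, abs_of_nonneg (by
      have := hw.1
      rw [← Subtype.coe_le_coe] at this
      linarith)]
    have h2 := hw.2
    rw [← Subtype.coe_le_coe] at h2
    have e1 := hτcoe i (by omega)
    have e2 := hτcoe (i+1) hi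
    have : (w:ℝ) - τ i ≤ 1 / m := by
      rw [e2] at h2
      rw [e1]
      have hsplit : (((i+1:ℕ)):ℝ)/m = (i:ℝ)/m + 1/m := by push_cast; ring
      rw [hsplit] at h2
      linarith
    exact lt_of_le_of_lt this hLm
  -- centers
  choose s hs using fun i : ℕ => hLnum (τ i) trivial
  set Ws : ℕ → Set X := fun i => W' (s i) with hWs
  have hτball : ∀ i, τ i ∈ Metric.ball (s i) (ε (s i)) := by
    intro i
    have := hs i (Metric.mem_ball_self hLpos)
    exact Metric.ball_subset_ball (by linarith [hεpos (s i)] : ε (s i)/2 ≤ ε (s i)) this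
  have hKδ : ∀ i, i + 1 ≤ m → ∀ w ∈ Icc (τ i) (τ (i+1)), δ w ∈ Ws i := by
    intro i hi w hw
    apply hεball (s i)
    apply Metric.ball_subset_ball (by linarith [hεpos (s i)] : ε (s i)/2 ≤ ε (s i))
    exact hs i (hdistτ i hi w hw)
  have hρmem : ∀ i t, δ (line (s i) (τ i) t) ∈ Ws i := by
    intro i t
    apply hεball (s i)
    have h1 := line_dist (s i) (τ i) t
    have h2 := hτball i
    rw [Metric.mem_ball] at h2 ⊢
    calc dist (line (s i) (τ i) t) (s i) ≤ dist (τ i) (s i) := by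
            have h3 := line_dist (s i) (τ i) t
            rwa [dist_comm (line (s i) (τ i) t) (s i), dist_comm (τ i) (s i)] at h3
      _ < ε (s i) := h2
  -- the compact-open neighborhood
  set Z : ℕ → Set X := fun i => pathComponentIn (Ws (i-1) ∩ Ws i) (δ (τ i)) with hZ
  set N : Set (Path x₀ x₀) :=
    (⋂ i ∈ Finset.range m, {δ' : Path x₀ x₀ | MapsTo δ' (Icc (τ i) (τ (i+1))) (Ws i)}) ∩
    (⋂ i ∈ Finset.Ioo 0 m, {δ' : Path x₀ x₀ | δ' (τ i) ∈ Z i}) with hN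
  refine ⟨N, ?_, ?_, ?_⟩
  · -- N is contained in the set
    rintro δ' ⟨hN1, hN2⟩
    have hN1' : ∀ i, i < m → ∀ w ∈ Icc (τ i) (τ (i+1)), δ' w ∈ Ws i := by
      intro i hi w hw
      exact Set.mem_iInter₂.mp hN1 i (Finset.mem_range.mpr hi) hw
    have hN2' : ∀ i, 0 < i → i < m → δ' (τ i) ∈ Z i := by
      intro i h1 h2
      exact Set.mem_iInter₂.mp hN2 i (Finset.mem_Ioo.mpr ⟨h1, h2⟩)
    have hδτ0 : δ (τ 0) = x₀ := by rw [hτ0]; exact δ.source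
    have hδ'τ0 : δ' (τ 0) = x₀ := by rw [hτ0]; exact δ'.source
    have hδτm : ∀ i, m ≤ i → δ (τ i) = x₀ := fun i hi => by rw [hτm i hi]; exact δ.target
    have hδ'τm : ∀ i, m ≤ i → δ' (τ i) = x₀ := fun i hi => by rw [hτm i hi]; exact δ'.target
    have hδτWs : ∀ i, i < m → δ (τ i) ∈ Ws i :=
      fun i hi => hKδ i hi (τ i) ⟨le_refl _, hτmono i⟩
    have hδτWs' : ∀ i, 0 < i → i ≤ m → δ (τ i) ∈ Ws (i-1) := by
      intro i h1 h2
      obtain ⟨j, rfl⟩ : ∃ j, i = j + 1 := ⟨i-1, by omega⟩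
      simpa using hKδ j (by omega) (τ (j+1)) ⟨hτmono j, le_refl _⟩
    have hηex : ∀ i : ℕ, ∃ e : Path (δ (τ i)) (δ' (τ i)),
        (i < m → ∀ t, e t ∈ Ws i) ∧ (0 < i → i ≤ m → ∀ t, e t ∈ Ws (i-1)) ∧
        ((i = 0 ∨ m ≤ i) → ∀ t, e t = x₀) := by
      intro i
      rcases Nat.eq_zero_or_pos i with rfl | hpos
      · refine ⟨(Path.refl x₀).cast hδτ0 hδ'τ0, ?_, ?_, ?_⟩
        · intro hm0 t
          show ((Path.refl x₀).cast hδτ0 hδ'τ0) t ∈ Ws 0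
          have : ((Path.refl x₀).cast hδτ0 hδ'τ0) t = x₀ := by rw [Path.cast_coe]; rfl
          rw [this, ← hδτ0]
          exact hδτWs 0 hm0
        · omega
        · intro _ t
          rw [Path.cast_coe]; rfl
      rcases le_or_gt m i with hge | hlt
      · refine ⟨(Path.refl x₀).cast (hδτm i hge) (hδ'τm i hge), ?_, ?_, ?_⟩
        · omega
        · intro _ hle t
          have hieq : i = m := le_antisymm hle hge
          have : ((Path.refl x₀).cast (hδτm i hge) (hδ'τm i hge)) t = x₀ := by
            rw [Path.cast_coe]; rfl
          rw [this, ← hδτm i hge]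
          exact hδτWs' i hpos hle
        · intro _ t
          rw [Path.cast_coe]; rfl
      · have hmem : JoinedIn (Ws (i-1) ∩ Ws i) (δ (τ i)) (δ' (τ i)) := hN2' i hpos hlt
        refine ⟨hmem.somePath, fun _ t => (hmem.somePath_mem t).2,
          fun _ _ t => (hmem.somePath_mem t).1, fun h => by omega⟩
    choose η hη1 hη2 hη3 using hηex
    set A' : ∀ i : ℕ, Path x₀ (δ' (τ i)) := fun i => (seg δ' 0 (τ i)).cast δ'.source.symm rfl
      with hA'
    have hA'fac : ∀ i, Factors δ' (A' i) (segI 0 (τ i)) := by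
      intro i u
      show ((seg δ' 0 (τ i)).cast δ'.source.symm rfl) u = _
      rw [Path.cast_coe]
      rfl
    have main : ∀ i, i ≤ m → ∃ ζ : Path x₀ x₀, (∀ t, ζ t ∈ V) ∧
        ζ.Homotopic ((A' i).trans ((η i).symm.trans ((A (τ i)).symm))) := by
      intro i
      induction i with
      | zero =>
        intro _
        refine ⟨Path.refl x₀, fun _ => hx₀V, ?_⟩
        apply homotopic_refl_of_const
        have c1 : ∀ t, A' 0 t = x₀ := by
          intro t
          rw [hA'fac 0 t]
          show δ' (line 0 (τ 0) t) = x₀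
          rw [hτ0, line_self]
          exact δ'.source
        have c2 : ∀ t, A (τ 0) t = x₀ := by
          intro t
          rw [hAfac (τ 0) t]
          show δ (line 0 (τ 0) t) = x₀
          rw [hτ0, line_self]
          exact δ.source
        exact forall_trans_eq c1
          (forall_trans_eq (forall_symm_eq (hη3 0 (Or.inl rfl))) (forall_symm_eq c2))
      | succ i ih =>
        intro hi1
        have him : i < m := hi1
        obtain ⟨ζ, hζV, hζ⟩ := ih (by omega)
        have hηi1 : ∀ t, η (i+1) t ∈ Ws i := by
          intro t
          simpa using hη2 (i+1) (Nat.succ_pos i) hi1 t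
        set rr : Path (δ (s i)) (δ (τ i)) := seg δ (s i) (τ i) with hrr
        set sg : Path (δ (τ i)) (δ (τ (i+1))) := seg δ (τ i) (τ (i+1)) with hsg
        set b : Path (δ' (τ i)) (δ' (τ (i+1))) := seg δ' (τ i) (τ (i+1)) with hb
        set loopd : Path (δ (s i)) (δ (s i)) :=
          rr.trans (((η i).trans (b.trans ((η (i+1)).symm.trans sg.symm))).trans rr.symm)
          with hloopd
        have hloopmem : ∀ u, loopd u ∈ W (s i) := by
          apply forall_trans_mem
          · intro u; exact hW'sub (s i) (hρmem i u)
          apply forall_trans_mem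
          · apply forall_trans_mem
            · intro u; exact hW'sub (s i) (hη1 i him u)
            apply forall_trans_mem
            · intro u
              show δ' (line (τ i) (τ (i+1)) u) ∈ W (s i)
              exact hW'sub _ (hN1' i him _ (line_mem_Icc (hτmono i) u))
            apply forall_trans_mem
            · exact forall_symm_mem fun u => hW'sub _ (hηi1 u)
            · apply forall_symm_mem
              intro u
              show δ (line (τ i) (τ (i+1)) u) ∈ W (s i)
              exact hW'sub _ (hKδ i hi1 _ (line_mem_Icc (hτmono i) u))
          · apply forall_symm_mem
            intro u; exact hW'sub (s i) (hρmem i u)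
        obtain ⟨e', he'V, he'⟩ := hWtr (s i) loopd hloopmem
        refine ⟨ζ.trans e', forall_trans_mem hζV he'V, ?_⟩
        have h1 : ((A (s i)).trans rr).Homotopic (A (τ i)) :=
          Factors.homotopic (SLTAux.Factors.trans (hAfac (s i)) (factors_seg δ (s i) (τ i)))
            (hAfac (τ i))
        have h2 : ((A (τ i)).trans sg).Homotopic (A (τ (i+1))) :=
          Factors.homotopic (SLTAux.Factors.trans (hAfac (τ i)) (factors_seg δ (τ i) (τ (i+1))))
            (hAfac (τ (i+1)))
        have h3 : ((A' i).trans b).Homotopic (A' (i+1)) :=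
          Factors.homotopic (SLTAux.Factors.trans (hA'fac i) (factors_seg δ' (τ i) (τ (i+1))))
            (hA'fac (i+1))
        have hstep := step_homotopic (A (τ i)) (A' i) (A (s i)) rr (η i) (η (i+1)) b sg
          (A (τ (i+1))) (A' (i+1)) h1 h2 h3
        exact (Path.Homotopic.hcomp hζ he').trans hstep
    obtain ⟨ζ, hζV, hζfin⟩ := main m le_rfl
    have hAm : ∀ t, A (τ m) t = δ t := by
      intro t
      rw [hAfac (τ m) t]
      show δ (line 0 (τ m) t) = δ t
      rw [hτm m le_rfl, line_zero_one]
    have hA'm : ∀ t, A' m t = δ' t := by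
      intro t
      rw [hA'fac m t]
      show δ' (line 0 (τ m) t) = δ' t
      rw [hτm m le_rfl, line_zero_one]
    have hfin : δ'.Homotopic (ζ.trans δ) :=
      final_step δ δ' (A (τ m)) (A' m) (η m) ζ hAm hA'm (hη3 m (Or.inr le_rfl)) hζfin
    exact ⟨ζ.trans γ₀, forall_trans_mem hζV hγ₀V,
      hfin.trans (Path.Homotopic.hcomp (Path.Homotopic.refl ζ) hδγ₀)⟩
  · -- N is open
    apply IsOpen.inter
    · apply isOpen_biInter_finset
      intro i _
      have hcl : (Icc (τ i) (τ (i+1)) : Set I) =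
          Subtype.val ⁻¹' (Icc ((τ i : ℝ)) ((τ (i+1) : ℝ))) := by
        ext w
        simp only [mem_Icc, mem_preimage, ← Subtype.coe_le_coe]
      have hK : IsCompact (Icc (τ i) (τ (i+1)) : Set I) := by
        rw [hcl]
        exact (isClosed_Icc.preimage continuous_subtype_val).isCompact
      have hO := ContinuousMap.isOpen_setOf_mapsTo hK (hW'open (s i))
      exact hO.preimage (continuous_induced_dom (α := Path x₀ x₀))
    · apply isOpen_biInter_finset
      intro i _
      have hZopen : IsOpen (Z i) :=
        IsOpen.pathComponentIn ((hW'open (s (i-1))).inter (hW'open (s i))) _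
      exact hZopen.preimage (continuous_eval_const (τ i))
  · -- δ ∈ N
    refine ⟨Set.mem_iInter₂.mpr fun i hi => ?_, Set.mem_iInter₂.mpr fun i hi => ?_⟩
    · intro w hw
      exact hKδ i (Finset.mem_range.mp hi) w hw
    · simp only [Finset.mem_Ioo] at hi
      obtain ⟨j, rfl⟩ : ∃ j, i = j + 1 := ⟨i-1, by omega⟩
      apply mem_pathComponentIn_self
      refine ⟨?_, ?_⟩
      · simpa using hKδ j (by omega) (τ (j+1)) ⟨hτmono j, le_refl _⟩
      · exact hKδ (j+1) (by omega) (τ (j+1)) ⟨le_refl _, hτmono (j+1)⟩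

end BigLemma

end SLTInfra

section LoopClassLemmas
open Set unitInterval

lemma loopClass_eq_iff_s10 {X : Type*} [TopologicalSpace X] {x : X} {p q : Path x x} :
    loopClass p = loopClass q ↔ p.Homotopic q := by
  constructor
  · intro h
    have h2 := congrArg (fun g => FundamentalGroup.toPath (X := TopCat.of X) g) h
    exact Quotient.exact h2
  · intro h
    unfold loopClass
    congr 1
    exact Quotient.sound h

end LoopClassLemmas

/-- If `X` is a connected, locally path connected SLT space and
`π₁^{qtop}(X, x₀)` is an indiscrete topological group, then `X` is a small loop space. -/
theorem smallLoopSpace_of_slt_of_indiscrete {X : Type*} [TopologicalSpace X]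
    [ConnectedSpace X] [LocallyPathConnectedSpace X]
    (hslt : ∀ x : X, IsSLTAt X x) (x₀ : X)
    (htg : @IsTopologicalGroup (FundamentalGroup X x₀) (qtop X x₀) _)
    (hind : ∀ s : Set (FundamentalGroup X x₀), @IsOpen (FundamentalGroup X x₀) (qtop X x₀) s → s = ∅ ∨ s = Set.univ) :
    ∀ (x : X) (γ : Path x x), IsSmallLoop γ := by
  intro x γ U hU hxU
  have hpc : PathConnectedSpace X := pathConnectedSpace_iff_connectedSpace.mpr ‹_›
  have key : ∀ V : Set X, IsOpen V → x₀ ∈ V → ∀ ω : Path x₀ x₀,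
      ∃ ζ : Path x₀ x₀, (∀ t, ζ t ∈ V) ∧ ω.Homotopic ζ := by
    intro V hV hx₀V ω
    have hopen : @IsOpen _ (qtop X x₀) (loopClassesIn x₀ V) := by
      show @IsOpen _ (TopologicalSpace.coinduced (fun γ : Path x₀ x₀ => loopClass γ)
        inferInstance) (loopClassesIn x₀ V)
      rw [isOpen_coinduced]
      have heq : (fun γ : Path x₀ x₀ => loopClass γ) ⁻¹' loopClassesIn x₀ V =
          {δ : Path x₀ x₀ | ∃ γ : Path x₀ x₀, (∀ t, γ t ∈ V) ∧ δ.Homotopic γ} := by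
        ext δ
        constructor
        · rintro ⟨γ₁, hγ₁, hg⟩
          exact ⟨γ₁, hγ₁, loopClass_eq_iff_s10.mp hg⟩
        · rintro ⟨γ₁, hγ₁, hg⟩
          exact ⟨γ₁, hγ₁, loopClass_eq_iff_s10.mpr hg⟩
      rw [heq]
      exact isOpen_setOf_homotopic_loopIn (hslt x₀) hV hx₀V
    rcases hind _ hopen with hbot | htop
    · exfalso
      have hmem : loopClass (Path.refl x₀) ∈ loopClassesIn x₀ V :=
        ⟨Path.refl x₀, fun _ => hx₀V, rfl⟩
      rw [hbot] at hmem
      exact hmem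
    · have hmem : loopClass ω ∈ loopClassesIn x₀ V := by rw [htop]; trivial
      obtain ⟨ζ, hζV, hζ⟩ := hmem
      exact ⟨ζ, hζV, loopClass_eq_iff_s10.mp hζ⟩
  let p : Path x x₀ := PathConnectedSpace.somePath x x₀
  obtain ⟨V, hV, hx₀V, htr⟩ := hslt x x₀ p U hU hxU
  obtain ⟨ζ, hζV, hζ⟩ := key V hV hx₀V ((p.symm.trans γ).trans p)
  obtain ⟨γ', hγ'U, hγ'⟩ := htr ζ hζV
  refine ⟨γ', hγ'U, ?_⟩
  have h2 : ((p.trans ζ).trans p.symm).Homotopic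
      ((p.trans ((p.symm.trans γ).trans p)).trans p.symm) :=
    Path.Homotopic.hcomp (Path.Homotopic.hcomp (Path.Homotopic.refl p) hζ.symm)
      (Path.Homotopic.refl p.symm)
  exact hγ'.trans (h2.trans (SLTAux3.conj_homotopic p γ))
end
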